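/- arXiv:1312.7569 — 6 statements merged into one kernel-verified Lean document; each statement's English description precedes it below -/
import Mathlib

section
/- Let p be a prime, let p' be the smallest prime greater than p, and let s = (c_1, ..., c_j) be a constellation of j gaps such that j < p' - 1 and c_1 + ... + c_j < 2p'. Let S be the set of all constellations of length j+1 obtained from s by replacing a single entry c_i by an ordered pair (a, b) of positive integers with a + b = c_i (i.e., the constellations which produce s upon one addition of adjacent entries). Then N_{p'}(s) = (p' - (j+1)) · N_p(s) + Σ_{s̄ ∈ S} N_p(s̄). -/
open Finset

/-- `b` is the next totative of `P` after `a`: `a < b`, `b` is coprime to `P`,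
and no integer strictly between `a` and `b` is coprime to `P`. -/
def IsNextTot (P a b : ℕ) : Prop :=
  a < b ∧ Nat.Coprime b P ∧ ∀ x, a < x → x < b → ¬ Nat.Coprime x P

/-- Starting at `r`, the successive totatives of `P` after `r` occur at the
successive partial sums of the list of gaps `c`. -/
def MatchesGaps (P : ℕ) : ℕ → List ℕ → Prop
  | _, [] => True
  | r, c :: cs => IsNextTot P r (r + c) ∧ MatchesGaps P (r + c) cs

open scoped Classical in
/-- `Ncount p s` : the number of (cyclic) occurrences of the constellation `s`
in the cycle of gaps `𝒢(p#)`.  Since the pattern of coprimality to `p#` is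
periodic with period `p#`, this is the number of totatives `r ∈ [1, p#]` of `p#`
at which the gap pattern `s` begins. -/
noncomputable def Ncount (p : ℕ) (s : List ℕ) : ℕ :=
  ((Finset.Icc 1 (primorial p)).filter
    (fun r => Nat.Coprime r (primorial p) ∧ MatchesGaps (primorial p) r s)).card

open scoped Classical in
/-- `nCount p g j` : the number of (cyclic) occurrences in `𝒢(p#)` of
constellations of length `j` with sum `g` (the driving terms of length `j`
for the gap `g`). -/
noncomputable def nCount (p g j : ℕ) : ℕ :=
  ((Finset.Icc 1 (primorial p)).filter
    (fun r => Nat.Coprime r (primorial p) ∧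
      ∃ c : List ℕ, c.length = j ∧ c.sum = g ∧ MatchesGaps (primorial p) r c)).card

/-- The set of constellations of length `s.length + 1` which produce `s` upon one
addition of adjacent entries: each is obtained from `s` by replacing a single entry
`c_i` by an ordered pair `(a, b)` of positive integers with `a + b = c_i`. -/
def refinements (s : List ℕ) : Finset (List ℕ) :=
  (Finset.range s.length).biUnion fun i =>
    (Finset.Ico 1 (s.getD i 0)).image fun a =>
      s.take i ++ [a, s.getD i 0 - a] ++ s.drop (i + 1)

/-- partial sum of the first `i` entries -/
def psum (c : List ℕ) (i : ℕ) : ℕ := (c.take i).sum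

@[simp] lemma psum_zero (c : List ℕ) : psum c 0 = 0 := rfl

@[simp] lemma psum_cons_succ (d : ℕ) (cs : List ℕ) (i : ℕ) :
    psum (d :: cs) (i + 1) = d + psum cs i := by
  simp [psum]

lemma psum_succ_of_lt {c : List ℕ} {i : ℕ} (h : i < c.length) :
    psum c (i + 1) = psum c i + c.getD i 0 := by
  unfold psum
  rw [List.take_succ, List.sum_append]
  simp [List.getD, List.getElem?_eq_getElem h]

lemma psum_length (c : List ℕ) : psum c c.length = c.sum := by
  simp [psum]

lemma psum_mono (c : List ℕ) : Monotone (psum c) := by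
  apply monotone_nat_of_le_succ
  intro n
  unfold psum
  rw [List.take_succ, List.sum_append]
  omega

lemma psum_le_sum (c : List ℕ) (i : ℕ) : psum c i ≤ c.sum := by
  have := psum_mono c (le_max_left i c.length)
  have h2 := psum_mono c (le_max_right i c.length)
  have : psum c (max i c.length) = c.sum := by
    unfold psum
    rw [List.take_of_length_le (le_max_right _ _)]
  omega

lemma psum_strict_lt {c : List ℕ} (hpos : ∀ x ∈ c, 0 < x) {i k : ℕ}
    (h1 : i < k) (h2 : i < c.length) : psum c i < psum c k := by
  have hk : psum c (i+1) ≤ psum c k := psum_mono c h1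
  have := psum_succ_of_lt h2
  have hx : 0 < c.getD i 0 := by
    apply hpos
    have : i < c.length := h2
    rw [List.getD_eq_getElem _ _ h2]
    exact List.getElem_mem _
  omega

lemma psum_pos {c : List ℕ} (hpos : ∀ x ∈ c, 0 < x) {k : ℕ} (hk : 0 < k)
    (hlen : 0 < c.length) : 0 < psum c k := by
  have := psum_strict_lt hpos hk hlen
  simpa using this

/-- `psum` plus sum of the rest -/
lemma psum_add_drop (c : List ℕ) (i : ℕ) : psum c i + (c.drop i).sum = c.sum := by
  conv_rhs => rw [← List.take_append_drop i c]
  rw [List.sum_append]; rfl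
section
variable {P : ℕ}

lemma coprime_shift (x k P : ℕ) : Nat.Coprime (x + k * P) P ↔ Nat.Coprime x P :=
  Nat.coprime_add_mul_right_left x P k

lemma isNextTot_shift (a b k P : ℕ) :
    IsNextTot P (a + k * P) (b + k * P) ↔ IsNextTot P a b := by
  unfold IsNextTot
  constructor
  · rintro ⟨h1, h2, h3⟩
    refine ⟨by omega, (coprime_shift b k P).1 h2, fun x hx1 hx2 hx3 => ?_⟩
    exact h3 (x + k * P) (by omega) (by omega) ((coprime_shift x k P).2 hx3)
  · rintro ⟨h1, h2, h3⟩
    refine ⟨by omega, (coprime_shift b k P).2 h2, fun x hx1 hx2 hx3 => ?_⟩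
    have hxk : k * P ≤ x := by omega
    have : x = (x - k * P) + k * P := by omega
    rw [this] at hx3
    exact h3 (x - k * P) (by omega) (by omega) ((coprime_shift _ k P).1 hx3)

lemma matchesGaps_shift (c : List ℕ) (r k P : ℕ) :
    MatchesGaps P (r + k * P) c ↔ MatchesGaps P r c := by
  induction c generalizing r with
  | nil => simp [MatchesGaps]
  | cons d cs ih =>
    show IsNextTot P _ _ ∧ _ ↔ IsNextTot P _ _ ∧ _
    have h1 : r + k * P + d = (r + d) + k * P := by ring
    rw [h1, isNextTot_shift, ih]
end
lemma pt_cons_iff {d : ℕ} {cs : List ℕ} {r x : ℕ} (hx : r + d < x) :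
    (∃ i, 0 < i ∧ i ≤ (d :: cs).length ∧ x = r + psum (d :: cs) i) ↔
      (∃ i, 0 < i ∧ i ≤ cs.length ∧ x = (r + d) + psum cs i) := by
  constructor
  · rintro ⟨i, h0, hl, rfl⟩
    match i, h0 with
    | (i+1), _ =>
      rw [psum_cons_succ] at hx ⊢
      refine ⟨i, ?_, by simpa using hl, by omega⟩
      rcases Nat.eq_zero_or_pos i with h | h
      · subst h; simp at hx
      · exact h
  · rintro ⟨i, h0, hl, rfl⟩
    exact ⟨i + 1, by omega, by simp; omega, by rw [psum_cons_succ]; ring⟩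

lemma mg_iff {P : ℕ} (c : List ℕ) (r : ℕ) (hr : Nat.Coprime r P) (hc : ∀ x ∈ c, 0 < x) :
    MatchesGaps P r c ↔ ∀ x, r < x → x ≤ r + c.sum →
      (Nat.Coprime x P ↔ ∃ i, 0 < i ∧ i ≤ c.length ∧ x = r + psum c i) := by
  induction c generalizing r with
  | nil =>
    simp only [MatchesGaps, List.sum_nil, add_zero]
    constructor
    · intro _ x hx1 hx2; omega
    · intro _; trivial
  | cons d cs ih =>
    have hd : 0 < d := hc d (by simp)
    have hcs : ∀ x ∈ cs, 0 < x := fun x hx => hc x (by simp [hx])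
    constructor
    · rintro ⟨⟨hlt, hco, hbet⟩, hmg⟩
      have H := (ih (r + d) hco hcs).1 hmg
      intro x hx1 hx2
      rcases lt_trichotomy x (r + d) with h | h | h
      · constructor
        · intro hcop; exact absurd hcop (hbet x hx1 h)
        · rintro ⟨i, h0, hl, rfl⟩
          match i, h0 with
          | (i+1), _ => rw [psum_cons_succ] at h; omega
      · subst h
        exact iff_of_true hco ⟨1, one_pos, by simp, by simp [psum]⟩
      · rw [pt_cons_iff h]
        exact H x h (by simp only [List.sum_cons] at hx2 ⊢; omega)
    · intro H
      have hco : Nat.Coprime (r + d) P := by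
        refine (H (r + d) (by omega) (by simp only [List.sum_cons]; omega)).2 ?_
        exact ⟨1, one_pos, by simp, by simp [psum]⟩
      refine ⟨⟨by omega, hco, fun x hx1 hx2 hcop => ?_⟩, ?_⟩
      · obtain ⟨i, h0, hl, rfl⟩ := (H x hx1 (by simp only [List.sum_cons]; omega)).1 hcop
        match i, h0 with
        | (i+1), _ => rw [psum_cons_succ] at hx2; omega
      · refine (ih (r + d) hco hcs).2 ?_
        intro x hx1 hx2
        rw [← pt_cons_iff hx1]
        exact H x (by omega) (by simp only [List.sum_cons] at hx2 ⊢; omega)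
lemma isNextTot_unique {P a b b' : ℕ} (h : IsNextTot P a b) (h' : IsNextTot P a b') : b = b' := by
  obtain ⟨h1, h2, h3⟩ := h
  obtain ⟨h1', h2', h3'⟩ := h'
  rcases lt_trichotomy b b' with hh | hh | hh
  · exact absurd h2 (h3' b h1 hh)
  · exact hh
  · exact absurd h2' (h3 b' h1' hh)

lemma matchesGaps_unique {P : ℕ} {c c' : List ℕ} {r : ℕ} (h : MatchesGaps P r c)
    (h' : MatchesGaps P r c') (hl : c.length = c'.length) : c = c' := by
  induction c generalizing c' r with
  | nil => cases c' with
    | nil => rfl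
    | cons d cs => simp at hl
  | cons d cs ih =>
    cases c' with
    | nil => simp at hl
    | cons d' cs' =>
      obtain ⟨hn, hm⟩ := h
      obtain ⟨hn', hm'⟩ := h'
      have hd : d = d' := by
        have := isNextTot_unique hn hn'; omega
      subst hd
      have := ih hm hm' (by simpa using hl)
      rw [this]

def splice (s : List ℕ) (i a : ℕ) : List ℕ :=
  s.take i ++ [a, s.getD i 0 - a] ++ s.drop (i + 1)

lemma splice_length {s : List ℕ} {i : ℕ} (hi : i < s.length) (a : ℕ) :
    (splice s i a).length = s.length + 1 := by
  simp [splice]; omega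

lemma splice_sum {s : List ℕ} {i a : ℕ} (hi : i < s.length) (ha : a < s.getD i 0) :
    (splice s i a).sum = s.sum := by
  have h1 : s.take i ++ s.drop i = s := List.take_append_drop i s
  have h2 : s.drop i = s.getD i 0 :: s.drop (i + 1) := by
    rw [List.getD_eq_getElem _ _ hi]
    exact (List.drop_eq_getElem_cons hi)
  have h3 : s.sum = (s.take i).sum + (s.getD i 0 + (s.drop (i+1)).sum) := by
    conv_lhs => rw [← h1, h2]
    simp
  unfold splice
  rw [List.append_assoc, List.sum_append]
  simp only [List.sum_cons, List.sum_append, List.sum_nil]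
  omega

lemma splice_pos {s : List ℕ} {i a : ℕ} (hi : i < s.length) (ha0 : 0 < a)
    (ha : a < s.getD i 0) (hpos : ∀ x ∈ s, 0 < x) : ∀ x ∈ splice s i a, 0 < x := by
  intro x hx
  unfold splice at hx
  rw [List.append_assoc] at hx
  simp only [List.mem_append, List.mem_cons, List.mem_singleton,
    List.not_mem_nil, or_false] at hx
  rcases hx with hx | (hx | hx) | hx
  · exact hpos x (List.mem_of_mem_take hx)
  · omega
  · omega
  · exact hpos x (List.mem_of_mem_drop hx)

lemma splice_psum_le {s : List ℕ} {i k : ℕ} (a : ℕ) (hk : k ≤ i) (hi : i ≤ s.length) :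
    psum (splice s i a) k = psum s k := by
  unfold psum splice
  rw [List.append_assoc, List.take_append_of_le_length, List.take_take,
    min_eq_left hk]
  rw [List.length_take]; omega

lemma splice_psum_mid {s : List ℕ} {i : ℕ} (a : ℕ) (hi : i < s.length) :
    psum (splice s i a) (i + 1) = psum s i + a := by
  unfold psum splice
  rw [List.append_assoc]
  have hlen : (s.take i).length = i := by rw [List.length_take]; omega
  rw [show i + 1 = (s.take i).length + 1 by omega, List.take_append]
  simp
  rw [List.take_of_length_le (by rw [hlen]; omega)]

lemma splice_psum_high {s : List ℕ} {i k a : ℕ} (hi : i < s.length) (ha : a < s.getD i 0)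
    (hk : i < k) : psum (splice s i a) (k + 1) = psum s k := by
  have hsum := splice_sum hi ha
  have h1 := psum_add_drop (splice s i a) (k + 1)
  have h2 := psum_add_drop s k
  have hdrop : (splice s i a).drop (k + 1) = s.drop k := by
    unfold splice
    rw [List.append_assoc]
    have hlen : (s.take i).length = i := by rw [List.length_take]; omega
    rw [show k + 1 = (s.take i).length + (k + 1 - i) by omega, List.drop_append]
    rw [show k + 1 - i = [a, s.getD i 0 - a].length + (k - i - 1) by simp; omega,
      List.drop_append, List.drop_drop]
    rw [List.drop_eq_nil_of_le (as := s.take i) (by omega),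
      List.drop_eq_nil_of_le (as := [a, s.getD i 0 - a]) (by omega), List.nil_append, List.nil_append]
    congr 1; omega
  rw [hdrop] at h1
  omega
lemma splice_pt_iff {s : List ℕ} {i a : ℕ} (hi : i < s.length) (ha : a < s.getD i 0)
    (r x : ℕ) :
    (∃ k, 0 < k ∧ k ≤ (splice s i a).length ∧ x = r + psum (splice s i a) k) ↔
      ((∃ k, 0 < k ∧ k ≤ s.length ∧ x = r + psum s k) ∨ x = r + psum s i + a) := by
  rw [splice_length hi]
  constructor
  · rintro ⟨k, hk0, hkl, rfl⟩
    rcases le_or_gt k i with h | h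
    · exact Or.inl ⟨k, hk0, by omega, by rw [splice_psum_le a h (le_of_lt hi)]⟩
    · rcases eq_or_lt_of_le (Nat.succ_le_of_lt h) with h' | h'
      · subst h'
        right; rw [splice_psum_mid a hi]; ring
      · obtain ⟨k', rfl⟩ : ∃ k', k = k' + 1 := ⟨k - 1, by omega⟩
        exact Or.inl ⟨k', by omega, by omega, by rw [splice_psum_high hi ha (by omega)]⟩
  · rintro (⟨k, hk0, hkl, rfl⟩ | rfl)
    · rcases le_or_gt k i with h | h
      · exact ⟨k, hk0, by omega, by rw [splice_psum_le a h (le_of_lt hi)]⟩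
      · exact ⟨k + 1, by omega, by omega, by rw [splice_psum_high hi ha h]⟩
    · exact ⟨i + 1, by omega, by omega, by rw [splice_psum_mid a hi]; ring⟩

lemma splice_getD_self {s : List ℕ} {i : ℕ} (hi : i < s.length) (a : ℕ) :
    (splice s i a).getD i 0 = a := by
  unfold splice
  rw [List.append_assoc]
  have hlen : (s.take i).length = i := by rw [List.length_take]; omega
  rw [List.getD_eq_getElem _ _ (by simp; omega)]
  rw [List.getElem_append_right (by omega)]
  simp [hlen]

lemma splice_getD_lt {s : List ℕ} {i k : ℕ} (hk : k < i) (hi : i ≤ s.length) (a : ℕ) :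
    (splice s i a).getD k 0 = s.getD k 0 := by
  unfold splice
  rw [List.append_assoc]
  have hlen : (s.take i).length = i := by rw [List.length_take]; omega
  have hk' : k < s.length := by omega
  rw [List.getD_eq_getElem _ _ (by simp; omega), List.getElem_append_left (by omega),
    List.getElem_take, List.getD_eq_getElem _ _ hk']

lemma splice_inj {s : List ℕ} {i a i' a' : ℕ} (hi : i < s.length) (hi' : i' < s.length)
    (ha : a < s.getD i 0) (ha' : a' < s.getD i' 0)
    (h : splice s i a = splice s i' a') : i = i' ∧ a = a' := by
  have key : ∀ i a i' a', i < s.length → i' < s.length → a < s.getD i 0 → i < i' →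
      splice s i a = splice s i' a' → False := by
    intro i a i' a' hi hi' ha hlt heq
    have h1 : (splice s i a).getD i 0 = a := splice_getD_self hi a
    have h2 : (splice s i' a').getD i 0 = s.getD i 0 := splice_getD_lt hlt (le_of_lt hi') a'
    rw [heq, h2] at h1
    omega
  rcases lt_trichotomy i i' with h' | h' | h'
  · exact absurd (key i a i' a' hi hi' ha h' h) (by simp)
  · subst h'
    refine ⟨rfl, ?_⟩
    have h1 : (splice s i a).getD i 0 = a := splice_getD_self hi a
    have h2 : (splice s i a').getD i 0 = a' := splice_getD_self hi a'
    rw [h, h2] at h1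
    omega
  · exact absurd (key i' a' i a hi' hi ha' h' h.symm) (by simp)

lemma mem_refinements {s t : List ℕ} :
    t ∈ refinements s ↔ ∃ i, i < s.length ∧ ∃ a, 0 < a ∧ a < s.getD i 0 ∧ t = splice s i a := by
  unfold refinements splice
  simp only [Finset.mem_biUnion, Finset.mem_range, Finset.mem_image, Finset.mem_Ico]
  constructor
  · rintro ⟨i, hi, a, ⟨ha1, ha2⟩, rfl⟩
    exact ⟨i, hi, a, by omega, ha2, rfl⟩
  · rintro ⟨i, hi, a, ha1, ha2, rfl⟩
    exact ⟨i, hi, a, ⟨by omega, ha2⟩, rfl⟩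
lemma not_pt_mid {s : List ℕ} (hpos : ∀ x ∈ s, 0 < x) {i a k : ℕ} (hi : i < s.length)
    (ha0 : 0 < a) (ha : a < s.getD i 0) (hk0 : 0 < k) (hkl : k ≤ s.length) :
    psum s k ≠ psum s i + a := by
  intro h
  rcases le_or_gt k i with hh | hh
  · have := psum_mono s hh; omega
  · have h1 : psum s (i+1) ≤ psum s k := psum_mono s hh
    have h2 := psum_succ_of_lt hi
    omega

/-- an s-match at r rules out a refinement match at r -/
lemma no_refinement_match {P : ℕ} {s : List ℕ} {r : ℕ} (hr : Nat.Coprime r P)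
    (hpos : ∀ x ∈ s, 0 < x) (hs : MatchesGaps P r s) {i a : ℕ} (hi : i < s.length)
    (ha0 : 0 < a) (ha : a < s.getD i 0) : ¬ MatchesGaps P r (splice s i a) := by
  intro ht
  have hpos' := splice_pos hi ha0 ha hpos
  have h2 := psum_succ_of_lt hi
  have hm : r < r + psum s i + a := by omega
  have hbound : psum s i + a ≤ s.sum := by
    have := psum_le_sum s (i+1); omega
  have hco : Nat.Coprime (r + psum s i + a) P := by
    have := (mg_iff (splice s i a) r hr hpos').1 ht (r + psum s i + a) hm
      (by rw [splice_sum hi ha]; omega)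
    refine this.2 ?_
    rw [splice_pt_iff hi ha]
    exact Or.inr rfl
  have := (mg_iff s r hr hpos).1 hs (r + psum s i + a) hm (by omega)
  obtain ⟨k, hk0, hkl, hk⟩ := this.1 hco
  exact not_pt_mid hpos hi ha0 ha hk0 hkl (by omega)

section primorialFacts
variable {p p' : ℕ} (hp : p.Prime) (hp' : p'.Prime) (hlt : p < p')
  (hmin : ∀ q : ℕ, q.Prime → p < q → p' ≤ q)

include hp in
lemma two_dvd_primorial : 2 ∣ primorial p := by
  apply Finset.dvd_prod_of_mem
  simp only [Finset.mem_filter, Finset.mem_range]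
  exact ⟨by have := hp.two_le; omega, Nat.prime_two⟩

include hp hp' hlt in
lemma odd_p' : ¬ 2 ∣ p' := by
  have : p' ≠ 2 := by have := hp.two_le; omega
  intro h
  exact this ((Nat.prime_dvd_prime_iff_eq Nat.prime_two hp').1 h).symm

include hp' hlt in
lemma not_dvd_primorial : ¬ p' ∣ primorial p := by
  intro h
  obtain ⟨q, hq, hdvd⟩ := hp'.prime.exists_mem_finset_dvd h
  simp only [Finset.mem_filter, Finset.mem_range] at hq
  have := (Nat.prime_dvd_prime_iff_eq hp' hq.2).1 hdvd
  omega

include hp' hlt hmin in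
lemma primorial_eq : primorial p' = p' * primorial p := by
  unfold primorial
  have hset : Finset.filter Nat.Prime (Finset.range (p' + 1)) =
      insert p' (Finset.filter Nat.Prime (Finset.range (p + 1))) := by
    ext q
    simp only [Finset.mem_filter, Finset.mem_range, Finset.mem_insert]
    constructor
    · rintro ⟨hq1, hq2⟩
      rcases eq_or_ne q p' with h | h
      · exact Or.inl h
      · right
        refine ⟨?_, hq2⟩
        by_contra hq3
        have := hmin q hq2 (by omega)
        omega
    · rintro (rfl | ⟨hq1, hq2⟩)
      · exact ⟨by omega, hp'⟩
      · exact ⟨by omega, hq2⟩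
  rw [hset, Finset.prod_insert (by simp only [Finset.mem_filter, Finset.mem_range]; omega)]

include hp' hlt in
lemma coprime_iff_Q {x : ℕ} :
    Nat.Coprime x (p' * primorial p) ↔ Nat.Coprime x (primorial p) ∧ ¬ p' ∣ x := by
  rw [Nat.coprime_mul_iff_right]
  have : Nat.Coprime x p' ↔ ¬ p' ∣ x := by
    rw [Nat.coprime_comm]
    exact hp'.coprime_iff_not_dvd
  tauto

end primorialFacts

/-- two close multiples of odd `p'` coprime to even `P` coincide -/
lemma eq_of_close {P p' x y : ℕ} (h2 : 2 ∣ P) (hodd : ¬ 2 ∣ p')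
    (hx : Nat.Coprime x P) (hy : Nat.Coprime y P) (hdx : p' ∣ x) (hdy : p' ∣ y)
    (hle : x ≤ y) (hcl : y < x + 2 * p') : x = y := by
  have hxodd : ¬ 2 ∣ x := fun h => by
    have : (2:ℕ) ∣ 1 := hx ▸ Nat.dvd_gcd h h2
    omega
  have hyodd : ¬ 2 ∣ y := fun h => by
    have : (2:ℕ) ∣ 1 := hy ▸ Nat.dvd_gcd h h2
    omega
  obtain ⟨u, rfl⟩ := hdx
  obtain ⟨v, rfl⟩ := hdy
  rcases Nat.even_or_odd p' with h | h
  · exact absurd h.two_dvd hodd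
  rcases Nat.even_or_odd u with hu | hu
  · exact absurd (Dvd.dvd.mul_left hu.two_dvd p') hxodd
  rcases Nat.even_or_odd v with hv | hv
  · exact absurd (Dvd.dvd.mul_left hv.two_dvd p') hyodd
  obtain ⟨a, ha⟩ := hu
  obtain ⟨b, hb⟩ := hv
  have hp0 : 0 < p' := by rcases h with ⟨t, ht⟩; omega
  have huv : u ≤ v := Nat.le_of_mul_le_mul_left hle hp0
  have hvu : v < u + 2 := by
    have hmul : p' * v < p' * (u + 2) := by
      rw [Nat.mul_add]; omega
    exact Nat.lt_of_mul_lt_mul_left hmul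
  have : u = v := by omega
  rw [this]
section core
variable {P p' : ℕ} (h2 : 2 ∣ P) (hodd : ¬ 2 ∣ p')
  (hcoQ : ∀ x : ℕ, Nat.Coprime x (p' * P) ↔ Nat.Coprime x P ∧ ¬ p' ∣ x)
  {s : List ℕ} (hpos : ∀ x ∈ s, 0 < x) (hsum : s.sum < 2 * p')

include h2 hodd hcoQ hpos hsum in
lemma classify {r : ℕ} (hrP : Nat.Coprime r P) (hrQ : ¬ p' ∣ r)
    (hQ : MatchesGaps (p' * P) r s) :
    MatchesGaps P r s ∨ ∃ i, i < s.length ∧ ∃ a, 0 < a ∧ a < s.getD i 0 ∧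
      MatchesGaps P r (splice s i a) ∧ p' ∣ (r + psum s i + a) := by
  have hrQ' : Nat.Coprime r (p' * P) := (hcoQ r).2 ⟨hrP, hrQ⟩
  have HQ := (mg_iff s r hrQ' hpos).1 hQ
  by_cases hD : ∃ m, r < m ∧ m ≤ r + s.sum ∧ Nat.Coprime m P ∧ p' ∣ m
  · right
    obtain ⟨m, hm1, hm2, hm3, hm4⟩ := hD
    have huniq : ∀ m', r < m' → m' ≤ r + s.sum → Nat.Coprime m' P → p' ∣ m' → m' = m := by
      intro m' h1 h2' h3 h4
      rcases le_total m' m with h | h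
      · exact eq_of_close h2 hodd h3 hm3 h4 hm4 h (by omega)
      · exact (eq_of_close h2 hodd hm3 h3 hm4 h4 h (by omega)).symm
    have hmnp : ∀ k, 0 < k → k ≤ s.length → m ≠ r + psum s k := by
      intro k hk1 hk2 hk3
      have hq : Nat.Coprime m (p' * P) := (HQ m hm1 hm2).2 ⟨k, hk1, hk2, hk3⟩
      exact ((hcoQ m).1 hq).2 hm4
    have hlen0 : 0 < s.length := by
      rcases s with _ | ⟨d, cs⟩
      · simp at hm1 hm2; omega
      · simp
    have hex : ∃ n, m - r ≤ psum s (n + 1) :=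
      ⟨s.length - 1, by rw [show s.length - 1 + 1 = s.length by omega, psum_length]; omega⟩
    set i := Nat.find hex with hidef
    have hi1 : m - r ≤ psum s (i + 1) := Nat.find_spec hex
    have hilt : i < s.length := by
      have := Nat.find_le (h := hex) (n := s.length - 1)
        (show m - r ≤ psum s (s.length - 1 + 1) by
          rw [show s.length - 1 + 1 = s.length by omega, psum_length]; omega)
      omega
    have hlow : psum s i < m - r := by
      rcases Nat.eq_zero_or_pos i with h | h
      · rw [h]; simp; omega
      · have := Nat.find_min hex (m := i - 1) (by omega)
        simp only [show i - 1 + 1 = i by omega] at this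
        omega
    have hne : m - r ≠ psum s (i + 1) := fun h =>
      hmnp (i + 1) (by omega) (by omega) (by omega)
    have haub : psum s (i + 1) = psum s i + s.getD i 0 := psum_succ_of_lt hilt
    set a := m - r - psum s i with hadef
    have ha0 : 0 < a := by omega
    have haa : a < s.getD i 0 := by omega
    have hmr : m = r + psum s i + a := by omega
    refine ⟨i, hilt, a, ha0, haa, ?_, by rw [← hmr]; exact hm4⟩
    have hpos' := splice_pos hilt ha0 haa hpos
    rw [mg_iff _ r hrP hpos']
    intro x hx1 hx2
    rw [splice_sum hilt haa] at hx2
    rw [splice_pt_iff hilt haa]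
    constructor
    · intro hcop
      by_cases hdx : p' ∣ x
      · right
        have := huniq x hx1 hx2 hcop hdx
        omega
      · exact Or.inl ((HQ x hx1 hx2).1 ((hcoQ x).2 ⟨hcop, hdx⟩))
    · rintro (⟨k, hk0, hkl, rfl⟩ | rfl)
      · exact ((hcoQ _).1 ((HQ _ hx1 hx2).2 ⟨k, hk0, hkl, rfl⟩)).1
      · rw [← hmr]; exact hm3
  · left
    rw [mg_iff s r hrP hpos]
    intro x hx1 hx2
    rw [← HQ x hx1 hx2]
    constructor
    · intro hcop
      refine (hcoQ x).2 ⟨hcop, fun hdx => hD ⟨x, hx1, hx2, hcop, hdx⟩⟩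
    · intro hq
      exact ((hcoQ x).1 hq).1

include hcoQ hpos in
lemma match_of_nodvd {r : ℕ} (hrP : Nat.Coprime r P) (hs : MatchesGaps P r s)
    (hnd : ∀ k, k ≤ s.length → ¬ p' ∣ r + psum s k) :
    Nat.Coprime r (p' * P) ∧ MatchesGaps (p' * P) r s := by
  have hrQ : Nat.Coprime r (p' * P) := by
    refine (hcoQ r).2 ⟨hrP, ?_⟩
    have := hnd 0 (by omega)
    simpa using this
  refine ⟨hrQ, ?_⟩
  rw [mg_iff s r hrQ hpos]
  have HP := (mg_iff s r hrP hpos).1 hs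
  intro x hx1 hx2
  rw [hcoQ x]
  constructor
  · rintro ⟨h1, _⟩
    exact (HP x hx1 hx2).1 h1
  · intro hpt
    refine ⟨(HP x hx1 hx2).2 hpt, ?_⟩
    obtain ⟨k, hk0, hkl, rfl⟩ := hpt
    exact hnd k hkl

include h2 hodd hcoQ hpos hsum in
lemma match_of_splice {r i a : ℕ} (hi : i < s.length) (ha0 : 0 < a) (ha : a < s.getD i 0)
    (hrP : Nat.Coprime r P) (ht : MatchesGaps P r (splice s i a))
    (hdm : p' ∣ r + psum s i + a) :
    Nat.Coprime r (p' * P) ∧ MatchesGaps (p' * P) r s := by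
  have hpos' := splice_pos hi ha0 ha hpos
  have HT := (mg_iff _ r hrP hpos').1 ht
  have haub : psum s (i + 1) = psum s i + s.getD i 0 := psum_succ_of_lt hi
  have hub : psum s i + a < s.sum + 1 := by
    have := psum_le_sum s (i + 1); omega
  have hmP : Nat.Coprime (r + psum s i + a) P := by
    refine (HT (r + psum s i + a) (by omega) ?_).2 ?_
    · rw [splice_sum hi ha]; omega
    · rw [splice_pt_iff hi ha]; exact Or.inr rfl
  have key : ∀ x, r ≤ x → x ≤ r + s.sum → Nat.Coprime x P → p' ∣ x →
      x = r + psum s i + a := by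
    intro x h1 h2' h3 h4
    rcases le_total x (r + psum s i + a) with h | h
    · exact eq_of_close h2 hodd h3 hmP h4 hdm h (by omega)
    · exact (eq_of_close h2 hodd hmP h3 hdm h4 h (by omega)).symm
  have hrQ : Nat.Coprime r (p' * P) := by
    refine (hcoQ r).2 ⟨hrP, fun hd => ?_⟩
    have := key r le_rfl (by omega) hrP hd
    omega
  refine ⟨hrQ, ?_⟩
  rw [mg_iff s r hrQ hpos]
  intro x hx1 hx2
  rw [hcoQ x]
  constructor
  · rintro ⟨h1, hnd⟩
    have hpt := (HT x hx1 (by rw [splice_sum hi ha]; omega)).1 h1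
    rw [splice_pt_iff hi ha] at hpt
    rcases hpt with h | h
    · exact h
    · exact absurd (h ▸ hdm) hnd
  · rintro ⟨k, hk0, hkl, rfl⟩
    have hb1 : r < r + psum s k := by
      have := psum_pos hpos hk0 (by omega); omega
    have hb2 : r + psum s k ≤ r + (splice s i a).sum := by
      rw [splice_sum hi ha]
      have := psum_le_sum s k; omega
    have h1 : Nat.Coprime (r + psum s k) P := by
      refine (HT _ hb1 hb2).2 ?_
      rw [splice_pt_iff hi ha]
      exact Or.inl ⟨k, hk0, hkl, rfl⟩
    refine ⟨h1, fun hdx => ?_⟩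
    have := key _ (by omega) (by have := psum_le_sum s k; omega) h1 hdx
    exact not_pt_mid hpos hi ha0 ha hk0 hkl (by omega)

end core
lemma pts_coprime {P : ℕ} {s : List ℕ} (hpos : ∀ x ∈ s, 0 < x) {r : ℕ}
    (hr : Nat.Coprime r P) (hs : MatchesGaps P r s) :
    ∀ i, i ≤ s.length → Nat.Coprime (r + psum s i) P := by
  intro i hi
  rcases Nat.eq_zero_or_pos i with h | h
  · subst h; simpa using hr
  · have hlen0 : 0 < s.length := by omega
    refine ((mg_iff s r hr hpos).1 hs (r + psum s i) ?_ ?_).2 ⟨i, h, hi, rfl⟩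
    · have := psum_pos hpos h hlen0; omega
    · have := psum_le_sum s i; omega

lemma unique_k {p' P : ℕ} (hp' : p'.Prime) (hnd : ¬ p' ∣ P) (n : ℕ) :
    ∃! k, k < p' ∧ p' ∣ n + k * P := by
  haveI : Fact p'.Prime := ⟨hp'⟩
  have hP0 : (P : ZMod p') ≠ 0 := by
    rw [Ne, ZMod.natCast_eq_zero_iff]; exact hnd
  have hco : Nat.Coprime p' P := hp'.coprime_iff_not_dvd.2 hnd
  refine ⟨((-(n : ZMod p')) * (P : ZMod p')⁻¹).val, ⟨ZMod.val_lt _, ?_⟩, ?_⟩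
  · rw [← ZMod.natCast_eq_zero_iff]
    push_cast
    rw [ZMod.natCast_val, ZMod.cast_id]
    rw [mul_assoc, inv_mul_cancel₀ hP0, mul_one]
    ring
  · rintro k ⟨hk1, hk2⟩
    set k₀ := ((-(n : ZMod p')) * (P : ZMod p')⁻¹).val with hk₀def
    have hk₀lt : k₀ < p' := ZMod.val_lt _
    have hdvd₀ : p' ∣ n + k₀ * P := by
      rw [← ZMod.natCast_eq_zero_iff]
      push_cast
      rw [hk₀def, ZMod.natCast_val, ZMod.cast_id]
      rw [mul_assoc, inv_mul_cancel₀ hP0, mul_one]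
      ring
    -- both k and k₀ satisfy: show equal
    rcases le_total k k₀ with h | h
    · have hd : p' ∣ (k₀ - k) * P := by
        have : (k₀ - k) * P = (n + k₀ * P) - (n + k * P) := by
          rw [Nat.sub_mul]; omega
        rw [this]
        exact Nat.dvd_sub hdvd₀ hk2
      have hdd := Nat.Coprime.dvd_of_dvd_mul_right hco hd
      have h0 : k₀ - k = 0 := Nat.eq_zero_of_dvd_of_lt hdd (by omega)
      omega
    · have hd : p' ∣ (k - k₀) * P := by
        have : (k - k₀) * P = (n + k * P) - (n + k₀ * P) := by
          rw [Nat.sub_mul]; omega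
        rw [this]
        exact Nat.dvd_sub hk2 hdvd₀
      have hdd := Nat.Coprime.dvd_of_dvd_mul_right hco hd
      have h0 : k - k₀ = 0 := Nat.eq_zero_of_dvd_of_lt hdd (by omega)
      omega

open scoped Classical in
lemma filter_dvd_singleton {p' P : ℕ} (hp' : p'.Prime) (hnd : ¬ p' ∣ P) (n : ℕ) :
    ∃ k₀, ((Finset.range p').filter (fun k => p' ∣ n + k * P)) = {k₀} := by
  obtain ⟨k₀, ⟨hlt, hdvd⟩, huniq⟩ := unique_k hp' hnd n
  refine ⟨k₀, ?_⟩
  ext k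
  simp only [Finset.mem_filter, Finset.mem_range, Finset.mem_singleton]
  constructor
  · rintro ⟨h1, h2⟩; exact huniq k ⟨h1, h2⟩
  · rintro rfl; exact ⟨hlt, hdvd⟩

open scoped Classical in
lemma card_good {p' P : ℕ} (hp' : p'.Prime) (hnd : ¬ p' ∣ P) (j : ℕ) (hj : j + 1 ≤ p')
    (pt : ℕ → ℕ)
    (hdist : ∀ i i' k, i ≤ j → i' ≤ j → p' ∣ pt i + k * P → p' ∣ pt i' + k * P → i = i') :
    ((Finset.range p').filter (fun k => ∀ i, i ≤ j → ¬ p' ∣ pt i + k * P)).card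
      = p' - (j + 1) := by
  classical
  have hkf : ∀ i : ℕ, ∃! k, k < p' ∧ p' ∣ pt i + k * P := fun i => unique_k hp' hnd (pt i)
  set kf : ℕ → ℕ := fun i => (hkf i).choose with hkfdef
  have hkfspec : ∀ i, kf i < p' ∧ p' ∣ pt i + kf i * P := fun i => (hkf i).choose_spec.1
  have hbad : ((Finset.range p').filter (fun k => ∃ i, i ≤ j ∧ p' ∣ pt i + k * P))
      = (Finset.range (j + 1)).image kf := by
    ext k
    simp only [Finset.mem_filter, Finset.mem_range, Finset.mem_image]
    constructor
    · rintro ⟨hk, i, hi, hdvd⟩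
      refine ⟨i, by omega, ((hkf i).choose_spec.2 k ⟨hk, hdvd⟩).symm⟩
    · rintro ⟨i, hi, rfl⟩
      exact ⟨(hkfspec i).1, i, by omega, (hkfspec i).2⟩
  have hinj : Set.InjOn kf (Finset.range (j + 1)) := by
    intro i hi i' hi' h
    simp only [Finset.coe_range, Set.mem_Iio] at hi hi'
    exact hdist i i' (kf i) (by omega) (by omega) (hkfspec i).2 (h ▸ (hkfspec i').2)
  have hcard_bad : ((Finset.range p').filter
      (fun k => ∃ i, i ≤ j ∧ p' ∣ pt i + k * P)).card = j + 1 := by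
    rw [hbad, Finset.card_image_of_injOn hinj, Finset.card_range]
  have hcompl : ((Finset.range p').filter (fun k => ∀ i, i ≤ j → ¬ p' ∣ pt i + k * P))
      = Finset.range p' \ ((Finset.range p').filter (fun k => ∃ i, i ≤ j ∧ p' ∣ pt i + k * P)) := by
    rw [Finset.sdiff_eq_filter]
    apply Finset.filter_congr
    intro k hk
    simp only [Finset.mem_filter, Finset.mem_range, not_and, not_exists]
    constructor
    · intro h _ i hi hd
      exact h i hi hd
    · intro h i hi hd
      exact h (Finset.mem_range.1 hk) i hi hd
  rw [hcompl, Finset.card_sdiff_of_subset (Finset.filter_subset _ _), Finset.card_range, hcard_bad]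
open scoped Classical in
lemma fiber_count {p p' : ℕ} (hp : p.Prime) (hp' : p'.Prime) (hlt : p < p')
    {s : List ℕ} {j : ℕ} (hlen : s.length = j) (hpos : ∀ c ∈ s, 0 < c)
    (hj : j < p' - 1) (hsum : s.sum < 2 * p') (r₀ : ℕ) :
    ((Finset.range p').filter (fun k =>
        Nat.Coprime (r₀ + k * primorial p) (p' * primorial p) ∧
        MatchesGaps (p' * primorial p) (r₀ + k * primorial p) s)).card
      = (if Nat.Coprime r₀ (primorial p) ∧ MatchesGaps (primorial p) r₀ s
          then p' - (j + 1) else 0)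
        + ∑ t ∈ refinements s, (if Nat.Coprime r₀ (primorial p) ∧
            MatchesGaps (primorial p) r₀ t then 1 else 0) := by
  set P := primorial p with hPdef
  have h2 : 2 ∣ P := two_dvd_primorial hp
  have hodd : ¬ 2 ∣ p' := odd_p' hp hp' hlt
  have hnd : ¬ p' ∣ P := not_dvd_primorial hp' hlt
  have hcoQ : ∀ x : ℕ, Nat.Coprime x (p' * P) ↔ Nat.Coprime x P ∧ ¬ p' ∣ x :=
    fun x => coprime_iff_Q hp' hlt
  have hp'pos : 0 < p' := hp'.pos
  by_cases hA : Nat.Coprime r₀ P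
  swap
  · rw [if_neg (by tauto)]
    rw [Finset.sum_congr rfl (fun t _ => if_neg (by tauto)), Finset.sum_const_zero, add_zero]
    rw [Finset.card_eq_zero.2]
    rw [Finset.filter_eq_empty_iff]
    rintro k _ ⟨hc, _⟩
    exact hA ((coprime_shift r₀ k P).1 ((hcoQ _).1 hc).1)
  by_cases hB : MatchesGaps P r₀ s
  · rw [if_pos ⟨hA, hB⟩]
    have hz : ∀ t ∈ refinements s, (if Nat.Coprime r₀ P ∧ MatchesGaps P r₀ t
        then 1 else 0) = 0 := by
      intro t ht
      obtain ⟨i, hi, a, ha0, ha, rfl⟩ := mem_refinements.1 ht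
      exact if_neg (fun hh => no_refinement_match hA hpos hB hi ha0 ha hh.2)
    rw [Finset.sum_congr rfl hz, Finset.sum_const_zero, add_zero]
    have hiff : ∀ k ∈ Finset.range p',
        ((Nat.Coprime (r₀ + k * P) (p' * P) ∧ MatchesGaps (p' * P) (r₀ + k * P) s) ↔
          ∀ i, i ≤ j → ¬ p' ∣ (r₀ + psum s i) + k * P) := by
      intro k _
      constructor
      · rintro ⟨hc, hm⟩ i hi hdvd
        have hpt := pts_coprime hpos hc hm i (by omega)
        refine ((hcoQ _).1 hpt).2 ?_
        rw [show (r₀ + k * P) + psum s i = (r₀ + psum s i) + k * P by ring]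
        exact hdvd
      · intro hndk
        refine match_of_nodvd hcoQ hpos ((coprime_shift r₀ k P).2 hA)
          ((matchesGaps_shift s r₀ k P).2 hB) ?_
        intro i hi
        rw [show (r₀ + k * P) + psum s i = (r₀ + psum s i) + k * P by ring]
        exact hndk i (by omega)
    rw [Finset.filter_congr hiff]
    refine card_good hp' hnd j (by omega) (fun i => r₀ + psum s i) ?_
    intro i i' k hi hi' hd hd'
    have hx : Nat.Coprime ((r₀ + psum s i) + k * P) P :=
      (coprime_shift _ k P).2 (pts_coprime hpos hA hB i (by omega))
    have hy : Nat.Coprime ((r₀ + psum s i') + k * P) P :=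
      (coprime_shift _ k P).2 (pts_coprime hpos hA hB i' (by omega))
    have hbi := psum_le_sum s i
    have hbi' := psum_le_sum s i'
    have hkey : psum s i = psum s i' := by
      rcases le_total (psum s i) (psum s i') with h | h
      · have := eq_of_close h2 hodd hx hy hd hd' (by omega) (by omega)
        omega
      · have := eq_of_close h2 hodd hy hx hd' hd (by omega) (by omega)
        omega
    rcases lt_trichotomy i i' with h | h | h
    · have := psum_strict_lt hpos h (by omega); omega
    · exact h
    · have := psum_strict_lt hpos h (by omega); omega
  · rw [if_neg (by tauto), zero_add]
    by_cases hC : ∃ t, t ∈ refinements s ∧ MatchesGaps P r₀ t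
    · obtain ⟨t₀, htmem, htm⟩ := hC
      obtain ⟨i₀, hi₀, a₀, ha₀0, ha₀, rfl⟩ := mem_refinements.1 htmem
      have hiff : ∀ k ∈ Finset.range p',
          ((Nat.Coprime (r₀ + k * P) (p' * P) ∧ MatchesGaps (p' * P) (r₀ + k * P) s) ↔
            p' ∣ (r₀ + psum s i₀ + a₀) + k * P) := by
        intro k _
        constructor
        · rintro ⟨hc, hm⟩
          have hrP : Nat.Coprime (r₀ + k * P) P := (coprime_shift r₀ k P).2 hA
          have hrQ : ¬ p' ∣ (r₀ + k * P) := ((hcoQ _).1 hc).2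
          rcases classify h2 hodd hcoQ hpos hsum hrP hrQ hm with h | ⟨i, hi, a, ha0, ha, hmt, hdvd⟩
          · exact absurd ((matchesGaps_shift s r₀ k P).1 h) hB
          · have hmt₀ : MatchesGaps P r₀ (splice s i a) :=
              (matchesGaps_shift _ r₀ k P).1 hmt
            have heq : splice s i a = splice s i₀ a₀ :=
              matchesGaps_unique hmt₀ htm (by rw [splice_length hi, splice_length hi₀])
            obtain ⟨hieq, haeq⟩ := splice_inj hi hi₀ ha ha₀ heq
            subst hieq; subst haeq
            rw [show (r₀ + psum s i + a) + k * P = (r₀ + k * P) + psum s i + a by ring]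
            exact hdvd
        · intro hd
          refine match_of_splice h2 hodd hcoQ hpos hsum hi₀ ha₀0 ha₀
            ((coprime_shift r₀ k P).2 hA) ((matchesGaps_shift _ r₀ k P).2 htm) ?_
          rw [show (r₀ + k * P) + psum s i₀ + a₀ = (r₀ + psum s i₀ + a₀) + k * P by ring]
          exact hd
      rw [Finset.filter_congr hiff]
      obtain ⟨k₀, hk₀⟩ := filter_dvd_singleton hp' hnd (r₀ + psum s i₀ + a₀)
      rw [hk₀, Finset.card_singleton]
      have hrw : ∀ t ∈ refinements s,
          (if Nat.Coprime r₀ P ∧ MatchesGaps P r₀ t then 1 else 0)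
            = if t = splice s i₀ a₀ then 1 else 0 := by
        intro t ht
        by_cases hte : t = splice s i₀ a₀
        · subst hte
          rw [if_pos ⟨hA, htm⟩, if_pos rfl]
        · rw [if_neg hte, if_neg]
          rintro ⟨-, hmm⟩
          obtain ⟨i', hi', a', ha0', ha', rfl⟩ := mem_refinements.1 ht
          exact hte (matchesGaps_unique hmm htm (by rw [splice_length hi', splice_length hi₀]))
      rw [Finset.sum_congr rfl hrw, Finset.sum_ite_eq' (refinements s) (splice s i₀ a₀)
        (fun _ => 1), if_pos htmem]
    · push_neg at hC
      rw [Finset.sum_congr rfl (fun t ht => if_neg (fun hh => hC t ht hh.2)),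
        Finset.sum_const_zero]
      rw [Finset.card_eq_zero.2]
      rw [Finset.filter_eq_empty_iff]
      rintro k _ ⟨hc, hm⟩
      have hrP : Nat.Coprime (r₀ + k * P) P := (coprime_shift r₀ k P).2 hA
      have hrQ : ¬ p' ∣ (r₀ + k * P) := ((hcoQ _).1 hc).2
      rcases classify h2 hodd hcoQ hpos hsum hrP hrQ hm with h | ⟨i, hi, a, ha0, ha, hmt, -⟩
      · exact hB ((matchesGaps_shift s r₀ k P).1 h)
      · exact hC _ (mem_refinements.2 ⟨i, hi, a, ha0, ha, rfl⟩)
          ((matchesGaps_shift _ r₀ k P).1 hmt)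


theorem count_recurrence (p p' : ℕ) (hp : p.Prime) (hp' : p'.Prime) (hlt : p < p')
    (hmin : ∀ q : ℕ, q.Prime → p < q → p' ≤ q)
    (s : List ℕ) (j : ℕ) (hlen : s.length = j) (hpos : ∀ c ∈ s, 0 < c)
    (hj : j < p' - 1) (hsum : s.sum < 2 * p') :
    Ncount p' s = (p' - (j + 1)) * Ncount p s + ∑ t ∈ refinements s, Ncount p t := by
  classical
  set P := primorial p with hPdef
  have hQeq : primorial p' = p' * P := primorial_eq hp' hlt hmin
  have hP0 : 0 < P := primorial_pos p
  have hp'0 : 0 < p' := hp'.pos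
  have hstep1 : Ncount p' s
      = (((Finset.Icc 1 P) ×ˢ (Finset.range p')).filter
          (fun q => Nat.Coprime (q.1 + q.2 * P) (p' * P) ∧
            MatchesGaps (p' * P) (q.1 + q.2 * P) s)).card := by
    unfold Ncount
    simp only [hQeq]
    apply Finset.card_nbij' (i := fun r => ((r - 1) % P + 1, (r - 1) / P))
      (j := fun q => q.1 + q.2 * P)
    · intro r hr
      simp only [Finset.mem_coe, Finset.mem_filter, Finset.mem_Icc] at hr
      obtain ⟨⟨hr1, hr2⟩, hcond⟩ := hr
      have hre : (r - 1) % P + 1 + ((r - 1) / P) * P = r := by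
        have := Nat.mod_add_div' (r - 1) P
        omega
      simp only [Finset.mem_coe, Finset.mem_filter, Finset.mem_product, Finset.mem_Icc, Finset.mem_range]
      refine ⟨⟨⟨by omega, ?_⟩, ?_⟩, ?_⟩
      · have := Nat.mod_lt (r - 1) hP0
        omega
      · have : (r - 1) / P < p' := by
          apply Nat.div_lt_of_lt_mul
          calc r - 1 < r := by omega
          _ ≤ p' * P := hr2
          _ = P * p' := by ring
        exact this
      · rw [hre]
        exact hcond
    · intro q hq
      simp only [Finset.mem_coe, Finset.mem_filter, Finset.mem_product, Finset.mem_Icc, Finset.mem_range] at hq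
      obtain ⟨⟨⟨hq1, hq2⟩, hq3⟩, hcond⟩ := hq
      simp only [Finset.mem_coe, Finset.mem_filter, Finset.mem_Icc]
      refine ⟨⟨by omega, ?_⟩, hcond⟩
      have h1 : q.2 + 1 ≤ p' := by omega
      have h2 : (q.2 + 1) * P ≤ p' * P := Nat.mul_le_mul_right P h1
      have h3 : q.2 * P + P = (q.2 + 1) * P := by ring
      omega
    · intro r hr
      simp only [Finset.mem_coe, Finset.mem_filter, Finset.mem_Icc] at hr
      show (r - 1) % P + 1 + (r - 1) / P * P = r
      have := Nat.mod_add_div' (r - 1) P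
      omega
    · intro q hq
      simp only [Finset.mem_coe, Finset.mem_filter, Finset.mem_product, Finset.mem_Icc, Finset.mem_range] at hq
      obtain ⟨⟨⟨hq1, hq2⟩, hq3⟩, hcond⟩ := hq
      have he : q.1 + q.2 * P - 1 = (q.1 - 1) + q.2 * P := by omega
      have hm : (q.1 - 1) + q.2 * P < P + q.2 * P := by omega
      ext
      · show (q.1 + q.2 * P - 1) % P + 1 = q.1
        rw [he, Nat.add_mul_mod_self_right, Nat.mod_eq_of_lt (by omega)]
        omega
      · show (q.1 + q.2 * P - 1) / P = q.2
        rw [he, Nat.add_mul_div_right _ _ hP0, Nat.div_eq_of_lt (by omega)]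
        omega
  have hstep2 : (((Finset.Icc 1 P) ×ˢ (Finset.range p')).filter
          (fun q => Nat.Coprime (q.1 + q.2 * P) (p' * P) ∧
            MatchesGaps (p' * P) (q.1 + q.2 * P) s)).card
      = ∑ r₀ ∈ Finset.Icc 1 P, ((Finset.range p').filter (fun k =>
          Nat.Coprime (r₀ + k * P) (p' * P) ∧
          MatchesGaps (p' * P) (r₀ + k * P) s)).card := by
    rw [Finset.card_filter, Finset.sum_product]
    exact Finset.sum_congr rfl fun x _ => (Finset.card_filter _ _).symm
  rw [hstep1, hstep2]
  rw [Finset.sum_congr rfl fun r₀ _ => fiber_count hp hp' hlt hlen hpos hj hsum r₀]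
  rw [Finset.sum_add_distrib]
  congr 1
  · unfold Ncount
    rw [← Finset.sum_filter, Finset.sum_const, smul_eq_mul, mul_comm]
  · rw [Finset.sum_comm]
    refine Finset.sum_congr rfl fun t _ => ?_
    unfold Ncount
    rw [Finset.card_filter]
end

section
/- For every prime p ≥ 3, the number of gaps equal to 2 in the cycle of gaps 𝒢(p#) equals ∏_{q odd prime, q ≤ p} (q - 2); equivalently, the number of integers r with 1 ≤ r ≤ p# such that both r and r + 2 are coprime to p# equals ∏_{q odd prime, q ≤ p} (q - 2). -/
open Finset

def G (n : ℕ) : ℕ :=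
  ((Finset.Icc 1 n).filter (fun r => Nat.Coprime r n ∧ Nat.Coprime (r + 2) n)).card

lemma prod_isUnit_iff' {M N : Type*} [Monoid M] [Monoid N] {x : M × N} :
    IsUnit x ↔ IsUnit x.1 ∧ IsUnit x.2 := by
  constructor
  · intro h; exact ⟨h.map (MonoidHom.fst M N), h.map (MonoidHom.snd M N)⟩
  · rintro ⟨h1, h2⟩
    obtain ⟨a, ha1, ha2⟩ := isUnit_iff_exists.mp h1
    obtain ⟨b, hb1, hb2⟩ := isUnit_iff_exists.mp h2
    exact isUnit_iff_exists.mpr ⟨(a, b), Prod.ext ha1 hb1, Prod.ext ha2 hb2⟩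

open scoped Classical in
lemma G_eq {n : ℕ} [NeZero n] (hn : 2 ≤ n) :
    G n = Fintype.card {x : ZMod n // IsUnit x ∧ IsUnit (x + 2)} := by
  haveI : Fact (1 < n) := ⟨by omega⟩
  rw [Fintype.card_subtype, G]
  refine Finset.card_bij' (fun r _ => (r : ZMod n)) (fun x _ => x.val) ?_ ?_ ?_ ?_
  · intro r hr
    simp only [Finset.mem_filter, Finset.mem_Icc] at hr
    simp only [Finset.mem_filter, Finset.mem_univ, true_and]
    refine ⟨(ZMod.isUnit_iff_coprime r n).mpr hr.2.1, ?_⟩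
    have h : ((r : ZMod n) + 2) = ((r + 2 : ℕ) : ZMod n) := by push_cast; ring
    rw [h]
    exact (ZMod.isUnit_iff_coprime (r + 2) n).mpr hr.2.2
  · intro x hx
    simp only [Finset.mem_filter, Finset.mem_univ, true_and] at hx
    have hx0 : x ≠ 0 := by
      intro h; rw [h] at hx
      exact one_ne_zero (isUnit_zero_iff.mp hx.1).symm
    have hv1 : 1 ≤ x.val := by
      rcases Nat.eq_zero_or_pos x.val with h | h
      · exact absurd ((ZMod.val_eq_zero x).mp h) hx0
      · exact h
    simp only [Finset.mem_filter, Finset.mem_Icc]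
    refine ⟨⟨hv1, (ZMod.val_lt x).le⟩, ?_, ?_⟩
    · rw [← ZMod.isUnit_iff_coprime, ZMod.natCast_zmod_val]; exact hx.1
    · rw [← ZMod.isUnit_iff_coprime]
      have h : ((x.val + 2 : ℕ) : ZMod n) = x + 2 := by
        push_cast; rw [ZMod.natCast_zmod_val]
      rw [h]; exact hx.2
  · intro r hr
    simp only [Finset.mem_filter, Finset.mem_Icc] at hr
    apply ZMod.val_cast_of_lt
    rcases Nat.lt_or_ge r n with h | h
    · exact h
    · exfalso
      have hrn : r = n := le_antisymm hr.1.2 h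
      have h2 : Nat.gcd r r = 1 := by rw [hrn] at hr ⊢; exact hr.2.1
      rw [Nat.gcd_self] at h2
      have := hn; omega
  · intro x _
    exact ZMod.natCast_zmod_val x

open scoped Classical in
lemma G_mul {m n : ℕ} (hm : 1 ≤ m) (hn : 1 ≤ n) (h : Nat.Coprime m n) :
    G (m * n) = G m * G n := by
  have G1 : G 1 = 1 := by decide
  rcases eq_or_lt_of_le hm with h1 | hm2
  · rw [← h1, one_mul, G1, one_mul]
  rcases eq_or_lt_of_le hn with h2 | hn2
  · rw [← h2, mul_one, G1, mul_one]
  haveI : NeZero m := ⟨by omega⟩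
  haveI : NeZero n := ⟨by omega⟩
  haveI : NeZero (m * n) := ⟨by positivity⟩
  rw [G_eq hm2, G_eq hn2, G_eq (by nlinarith : 2 ≤ m * n)]
  let e := ZMod.chineseRemainder h
  have key : Fintype.card {x : ZMod (m * n) // IsUnit x ∧ IsUnit (x + 2)}
      = Fintype.card {y : ZMod m × ZMod n //
          (IsUnit y.1 ∧ IsUnit (y.1 + 2)) ∧ (IsUnit y.2 ∧ IsUnit (y.2 + 2))} := by
    apply Fintype.card_congr
    refine Equiv.subtypeEquiv e.toEquiv (fun x => ?_)
    have he2 : e (x + 2) = e x + 2 := by rw [map_add, map_ofNat]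
    have hu : IsUnit x ↔ IsUnit (e x) := by
      constructor
      · intro hx; exact hx.map e
      · intro hx
        have := hx.map e.symm
        rwa [RingEquiv.symm_apply_apply] at this
    have hu2 : IsUnit (x + 2) ↔ IsUnit (e x + 2) := by
      rw [← he2]
      constructor
      · intro hx; exact hx.map e
      · intro hx
        have := hx.map e.symm
        rwa [RingEquiv.symm_apply_apply] at this
    have hfst : (e x + 2).1 = (e x).1 + 2 := rfl
    have hsnd : (e x + 2).2 = (e x).2 + 2 := rfl
    rw [hu, hu2, prod_isUnit_iff', prod_isUnit_iff' (x := e x + 2), hfst, hsnd]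
    tauto
  rw [key, Fintype.card_congr (Equiv.subtypeProdEquivProd
    (p := fun a : ZMod m => IsUnit a ∧ IsUnit (a + 2))
    (q := fun b : ZMod n => IsUnit b ∧ IsUnit (b + 2))), Fintype.card_prod]

lemma G_two : G 2 = 1 := by decide

lemma G_odd_prime {q : ℕ} (hq : q.Prime) (hodd : Odd q) : G q = q - 2 := by
  have h2 : q ≠ 2 := by rintro rfl; exact (by decide : ¬ Odd 2) hodd
  have h3 : 3 ≤ q := by have := hq.two_le; omega
  have hset : (Finset.Icc 1 q).filter (fun r => Nat.Coprime r q ∧ Nat.Coprime (r + 2) q)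
      = Finset.Icc 1 q \ {q - 2, q} := by
    ext r
    simp only [Finset.mem_filter, Finset.mem_sdiff, Finset.mem_insert, Finset.mem_singleton,
      Finset.mem_Icc, not_or]
    constructor
    · rintro ⟨hr, hc1, hc2⟩
      refine ⟨hr, ?_, ?_⟩
      · rintro rfl
        rw [(by omega : q - 2 + 2 = q)] at hc2
        have hg : Nat.gcd q q = 1 := hc2
        rw [Nat.gcd_self] at hg; omega
      · rintro rfl
        have hg : Nat.gcd r r = 1 := hc1
        rw [Nat.gcd_self] at hg; omega
    · rintro ⟨hr, hne1, hne2⟩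
      refine ⟨hr, ?_, ?_⟩
      · rw [Nat.coprime_comm, hq.coprime_iff_not_dvd]
        intro hdvd
        have := Nat.le_of_dvd (by omega) hdvd
        exact hne2 (by omega)
      · rw [Nat.coprime_comm, hq.coprime_iff_not_dvd]
        intro hdvd
        obtain ⟨k, hk⟩ := hdvd
        rcases Nat.lt_or_ge k 2 with hk2 | hk2
        · interval_cases k
          · omega
          · exact hne1 (by omega)
        · have h2q : 2 * q ≤ r + 2 := by rw [hk]; nlinarith
          omega
  rw [G, hset, Finset.card_sdiff_of_subset]
  · rw [Nat.card_Icc, Finset.card_insert_of_notMem (by simp; omega), Finset.card_singleton]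
    omega
  · intro x hx
    simp only [Finset.mem_insert, Finset.mem_singleton] at hx
    rcases hx with rfl | rfl <;> simp only [Finset.mem_Icc] <;> omega

lemma G_prod (s : Finset ℕ) (hs : ∀ q ∈ s, q.Prime) :
    G (∏ q ∈ s, q) = ∏ q ∈ s, G q := by
  induction s using Finset.induction_on with
  | empty => simp; decide
  | @insert a s ha ih =>
    rw [Finset.prod_insert ha, Finset.prod_insert ha]
    have hap : a.Prime := hs a (Finset.mem_insert_self a s)
    have hsp : ∀ q ∈ s, q.Prime := fun q hq => hs q (Finset.mem_insert_of_mem hq)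
    have hcop : Nat.Coprime a (∏ q ∈ s, q) :=
      Nat.Coprime.prod_right fun q hq =>
        (Nat.coprime_primes hap (hsp q hq)).mpr (fun h => ha (h ▸ hq))
    have hpos : 1 ≤ ∏ q ∈ s, q := Finset.prod_pos (fun q hq => (hsp q hq).pos)
    rw [G_mul hap.pos hpos hcop, ih hsp]

open scoped Classical in
theorem gap_two_count (p : ℕ) (hp : p.Prime) (h3 : 3 ≤ p) :
    Ncount p [2] = ∏ q ∈ (Finset.range (p + 1)).filter (fun q => q.Prime ∧ Odd q), (q - 2) ∧
    ((Finset.Icc 1 (primorial p)).filter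
        (fun r => Nat.Coprime r (primorial p) ∧ Nat.Coprime (r + 2) (primorial p))).card =
      ∏ q ∈ (Finset.range (p + 1)).filter (fun q => q.Prime ∧ Odd q), (q - 2) := by
  have hSsub : ∀ q ∈ (Finset.range (p + 1)).filter Nat.Prime, q.Prime := by
    intro q hq
    exact (Finset.mem_filter.mp hq).2
  have h2mem : 2 ∈ (Finset.range (p + 1)).filter Nat.Prime := by
    simp only [Finset.mem_filter, Finset.mem_range]
    exact ⟨by omega, Nat.prime_two⟩
  have hGP : G (primorial p) = ∏ q ∈ (Finset.range (p + 1)).filter Nat.Prime, G q := by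
    rw [primorial]; exact G_prod _ hSsub
  have hT : (Finset.range (p + 1)).filter (fun q => q.Prime ∧ Odd q)
      = ((Finset.range (p + 1)).filter Nat.Prime).erase 2 := by
    ext q
    simp only [Finset.mem_filter, Finset.mem_erase, Finset.mem_range]
    constructor
    · rintro ⟨h1, h2, hodd⟩
      refine ⟨?_, h1, h2⟩
      rintro rfl
      exact (by decide : ¬ Odd 2) hodd
    · rintro ⟨hne, h1, h2⟩
      exact ⟨h1, h2, h2.odd_of_ne_two hne⟩
  have hprod : G (primorial p)
      = ∏ q ∈ (Finset.range (p + 1)).filter (fun q => q.Prime ∧ Odd q), (q - 2) := by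
    rw [hGP, ← Finset.mul_prod_erase _ _ h2mem, G_two, one_mul, hT]
    apply Finset.prod_congr rfl
    intro q hq
    rw [← hT] at hq
    simp only [Finset.mem_filter, Finset.mem_range] at hq
    exact G_odd_prime hq.2.1 hq.2.2
  have hcard2 : ((Finset.Icc 1 (primorial p)).filter
      (fun r => Nat.Coprime r (primorial p) ∧ Nat.Coprime (r + 2) (primorial p))).card
      = G (primorial p) := by
    rw [G]
  have h2P : 2 ∣ primorial p := by
    rw [primorial]
    exact Finset.dvd_prod_of_mem _ h2mem
  have hN : Ncount p [2] = ((Finset.Icc 1 (primorial p)).filter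
      (fun r => Nat.Coprime r (primorial p) ∧ Nat.Coprime (r + 2) (primorial p))).card := by
    rw [Ncount]
    congr 1
    apply Finset.filter_congr
    intro r hr
    constructor
    · rintro ⟨h1, h2, -⟩
      exact ⟨h1, h2.2.1⟩
    · rintro ⟨h1, h2⟩
      refine ⟨h1, ⟨by omega, h2, ?_⟩, trivial⟩
      intro x hx1 hx2 hcop
      have hx : x = r + 1 := by omega
      subst hx
      have hrodd : ¬ 2 ∣ r := by
        intro hd
        have hg : 2 ∣ Nat.gcd r (primorial p) := Nat.dvd_gcd hd h2P
        have h1' : Nat.gcd r (primorial p) = 1 := h1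
        omega
      have hd1 : 2 ∣ r + 1 := by omega
      have hg : 2 ∣ Nat.gcd (r + 1) (primorial p) := Nat.dvd_gcd hd1 h2P
      have hc' : Nat.gcd (r + 1) (primorial p) = 1 := hcop
      omega
  exact ⟨hN.trans (hcard2.trans hprod), hcard2.trans hprod⟩
end

section
/- For every prime p ≥ 3, the number of gaps equal to 4 in the cycle of gaps 𝒢(p#) equals the number of gaps equal to 2 in 𝒢(p#): N_p(4) = N_p(2). -/
open Finset

/-! ### Auxiliary lemmas -/

lemma dvd_primorial_of_prime' {q p : ℕ} (hq : q.Prime) (hqp : q ≤ p) : q ∣ primorial p := by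
  unfold primorial
  exact Finset.dvd_prod_of_mem _ (by simp [Finset.mem_filter, Finset.mem_range, hq]; omega)

lemma exists_odd_half' {p : ℕ} (hp : 2 ≤ p) : ∃ k, primorial p = 2 * k ∧ Odd k := by
  classical
  refine ⟨∏ q ∈ (((Finset.range (p+1)).filter Nat.Prime).erase 2), q, ?_, ?_⟩
  · rw [primorial]
    exact (Finset.mul_prod_erase _ _ (by simp [Finset.mem_filter, Nat.prime_two]; omega)).symm
  · rw [← Nat.not_even_iff_odd, even_iff_two_dvd]
    intro h
    obtain ⟨q, hq, hdvd⟩ := (Nat.prime_two.prime.dvd_finset_prod_iff _).mp h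
    have hq2 : q ≠ 2 := (Finset.mem_erase.mp hq).1
    have hqpr : q.Prime := (Finset.mem_filter.mp (Finset.mem_erase.mp hq).2).2
    exact hq2 ((Nat.prime_dvd_prime_iff_eq Nat.prime_two hqpr).mp hdvd).symm

lemma three_dvd_add_two' {r : ℕ} (h1 : ¬ 3 ∣ r) (h2 : ¬ 3 ∣ (r + 4)) : 3 ∣ (r + 2) := by
  omega

lemma two_dvd_succ' {r : ℕ} (h : ¬ 2 ∣ r) : 2 ∣ (r + 1) ∧ 2 ∣ (r + 3) := by omega

lemma not_coprime_of_dvd' {d x P : ℕ} (hd : 2 ≤ d) (hdx : d ∣ x) (hdP : d ∣ P) :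
    ¬ Nat.Coprime x P := by
  intro h
  have h1 : d ∣ 1 := h ▸ Nat.dvd_gcd hdx hdP
  have := Nat.le_of_dvd one_pos h1
  omega

open scoped Classical in
lemma card_icc_eq_card_zmod (P : ℕ) [NeZero P] (hP : 2 ≤ P) (g : ℕ) :
    ((Finset.Icc 1 P).filter (fun r => Nat.Coprime r P ∧ Nat.Coprime (r + g) P)).card
  = (Finset.univ.filter (fun x : ZMod P => IsUnit x ∧ IsUnit (x + (g : ZMod P)))).card := by
  haveI : Fact (1 < P) := ⟨by omega⟩
  refine Finset.card_bij (fun r _ => (r : ZMod P)) ?_ ?_ ?_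
  · intro r hr
    simp only [Finset.mem_filter, Finset.mem_Icc] at hr ⊢
    refine ⟨Finset.mem_univ _, (ZMod.isUnit_iff_coprime r P).mpr hr.2.1, ?_⟩
    have h : ((r + g : ℕ) : ZMod P) = (r : ZMod P) + (g : ZMod P) := by push_cast; ring
    rw [← h]
    exact (ZMod.isUnit_iff_coprime _ P).mpr hr.2.2
  · intro r hr s hs h
    simp only [Finset.mem_filter, Finset.mem_Icc] at hr hs
    have hrP : r < P := lt_of_le_of_ne hr.1.2 (fun he => by
      have h1 : Nat.Coprime P P := he ▸ hr.2.1
      rw [Nat.Coprime, Nat.gcd_self] at h1; omega)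
    have hsP : s < P := lt_of_le_of_ne hs.1.2 (fun he => by
      have h1 : Nat.Coprime P P := he ▸ hs.2.1
      rw [Nat.Coprime, Nat.gcd_self] at h1; omega)
    have := (ZMod.natCast_eq_natCast_iff r s P).mp h
    rwa [Nat.ModEq, Nat.mod_eq_of_lt hrP, Nat.mod_eq_of_lt hsP] at this
  · intro x hx
    simp only [Finset.mem_filter, Finset.mem_univ, true_and] at hx
    have hcast : ((x.val : ℕ) : ZMod P) = x := by
      simp [ZMod.natCast_val, ZMod.cast_id]
    refine ⟨x.val, ?_, hcast⟩
    simp only [Finset.mem_filter, Finset.mem_Icc]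
    have h0 : x ≠ 0 := fun h => by rw [h] at hx; exact not_isUnit_zero hx.1
    have hv : x.val < P := ZMod.val_lt x
    have hv1 : 1 ≤ x.val := Nat.one_le_iff_ne_zero.mpr (fun h => h0 (by
      rwa [← ZMod.val_eq_zero]))
    refine ⟨⟨hv1, hv.le⟩, ?_, ?_⟩
    · rw [← ZMod.isUnit_iff_coprime, hcast]; exact hx.1
    · rw [← ZMod.isUnit_iff_coprime]
      have h2 : ((x.val + g : ℕ) : ZMod P) = x + (g : ZMod P) := by push_cast; rw [hcast]
      rw [h2]; exact hx.2

open scoped Classical in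
lemma zmod_card_shift (P k : ℕ) [NeZero P] (hPk : P = 2 * k) (hk : Odd k) :
    (Finset.univ.filter (fun x : ZMod P => IsUnit x ∧ IsUnit (x + ((2 : ℕ) : ZMod P)))).card
  = (Finset.univ.filter (fun x : ZMod P => IsUnit x ∧ IsUnit (x + ((4 : ℕ) : ZMod P)))).card := by
  have hk2 : Odd (k + 2) := by rcases hk with ⟨m, hm⟩; exact ⟨m + 1, by omega⟩
  have hco : Nat.Coprime (k + 2) P := by
    rw [hPk]
    refine Nat.Coprime.mul_right (hk2.coprime_two_right) ?_
    have : Nat.Coprime (2 + k) k := Nat.coprime_add_self_left.mpr (hk.coprime_two_left)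
    rwa [Nat.add_comm] at this
  set v : (ZMod P)ˣ := ZMod.unitOfCoprime (k + 2) hco with hv_def
  have hvc : (v : ZMod P) = ((k + 2 : ℕ) : ZMod P) := ZMod.coe_unitOfCoprime _ _
  have hu2 : (v : ZMod P) * ((2 : ℕ) : ZMod P) = ((4 : ℕ) : ZMod P) := by
    have h1 : ((k + 2) * 2 : ℕ) = P + 4 := by omega
    calc (v : ZMod P) * ((2:ℕ) : ZMod P) = (((k + 2) * 2 : ℕ) : ZMod P) := by
          rw [hvc]; push_cast; ring
      _ = ((P + 4 : ℕ) : ZMod P) := by rw [h1]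
      _ = ((4:ℕ) : ZMod P) := by rw [Nat.cast_add, ZMod.natCast_self, zero_add]
  refine Finset.card_bij (fun x _ => (v : ZMod P) * x) ?_ ?_ ?_
  · intro x hx
    simp only [Finset.mem_filter, Finset.mem_univ, true_and] at hx ⊢
    refine ⟨v.isUnit.mul hx.1, ?_⟩
    have h : (v : ZMod P) * x + ((4:ℕ) : ZMod P) = (v : ZMod P) * (x + ((2:ℕ) : ZMod P)) := by
      rw [mul_add, hu2]
    rw [h]
    exact v.isUnit.mul hx.2
  · intro x hx y hy h
    exact v.isUnit.mul_left_cancel h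
  · intro y hy
    simp only [Finset.mem_filter, Finset.mem_univ, true_and] at hy
    have h42 : (↑v⁻¹ : ZMod P) * ((4:ℕ) : ZMod P) = ((2:ℕ) : ZMod P) := by
      rw [← hu2, Units.inv_mul_cancel_left]
    refine ⟨(↑v⁻¹ : ZMod P) * y, ?_, by exact Units.mul_inv_cancel_left v y⟩
    simp only [Finset.mem_filter, Finset.mem_univ, true_and]
    refine ⟨v⁻¹.isUnit.mul hy.1, ?_⟩
    have h : (↑v⁻¹ : ZMod P) * y + ((2:ℕ) : ZMod P) = (↑v⁻¹ : ZMod P) * (y + ((4:ℕ):ZMod P)) := by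
      rw [mul_add, h42]
    rw [h]
    exact v⁻¹.isUnit.mul hy.2

theorem gap_four_eq_gap_two (p : ℕ) (hp : p.Prime) (h3 : 3 ≤ p) :
    Ncount p [4] = Ncount p [2] := by
  classical
  set P := primorial p with hPdef
  have h2d : 2 ∣ P := dvd_primorial_of_prime' Nat.prime_two (by omega)
  have h3d : 3 ∣ P := dvd_primorial_of_prime' Nat.prime_three h3
  have hP2 : 2 ≤ P := Nat.le_of_dvd (primorial_pos p) h2d
  have e2 : Ncount p [2] =
      ((Finset.Icc 1 P).filter (fun r => Nat.Coprime r P ∧ Nat.Coprime (r + 2) P)).card := by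
    unfold Ncount
    congr 1
    apply Finset.filter_congr
    intro r _
    simp only [MatchesGaps, IsNextTot, and_true]
    constructor
    · rintro ⟨h1, _, h2, _⟩; exact ⟨h1, h2⟩
    · rintro ⟨h1, h2⟩
      refine ⟨h1, ?_, h2, ?_⟩
      · omega
      intro x hx1 hx2
      have hr2 : ¬ 2 ∣ r := fun h => not_coprime_of_dvd' le_rfl h h2d h1
      have hx : x = r + 1 := by omega
      exact not_coprime_of_dvd' le_rfl (hx ▸ (two_dvd_succ' hr2).1) h2d
  have e4 : Ncount p [4] =
      ((Finset.Icc 1 P).filter (fun r => Nat.Coprime r P ∧ Nat.Coprime (r + 4) P)).card := by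
    unfold Ncount
    congr 1
    apply Finset.filter_congr
    intro r _
    simp only [MatchesGaps, IsNextTot, and_true]
    constructor
    · rintro ⟨h1, _, h2, _⟩; exact ⟨h1, h2⟩
    · rintro ⟨h1, h2⟩
      refine ⟨h1, ?_, h2, ?_⟩
      · omega
      intro x hx1 hx2
      have hr2 : ¬ 2 ∣ r := fun h => not_coprime_of_dvd' le_rfl h h2d h1
      have hr3 : ¬ 3 ∣ r := fun h => not_coprime_of_dvd' (by omega) h h3d h1
      have hr34 : ¬ 3 ∣ (r + 4) := fun h => not_coprime_of_dvd' (by omega) h h3d h2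
      have hcases : x = r + 1 ∨ x = r + 2 ∨ x = r + 3 := by omega
      have hor : 2 ∣ x ∨ 3 ∣ x := by
        rcases hcases with h | h | h
        · exact Or.inl (h ▸ (two_dvd_succ' hr2).1)
        · exact Or.inr (h ▸ three_dvd_add_two' hr3 hr34)
        · exact Or.inl (h ▸ (two_dvd_succ' hr2).2)
      rcases hor with h | h
      · exact not_coprime_of_dvd' le_rfl h h2d
      · exact not_coprime_of_dvd' (by omega) h h3d
  obtain ⟨k, hPk, hk⟩ := exists_odd_half' (le_trans (by norm_num) h3)
  haveI : NeZero P := ⟨by omega⟩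
  rw [e2, e4, card_icc_eq_card_zmod P hP2 4, card_icc_eq_card_zmod P hP2 2]
  exact (zmod_card_shift P k hPk hk).symm
end

section
/- Let J ≥ 1 be an integer and p > 2 a real number. Let R and L be the J×J matrices with R[i,j] = (-1)^{i+j} · C(j-1, i-1) for i ≤ j and R[i,j] = 0 for i > j, and L[i,j] = C(j-1, i-1) for i ≤ j and L[i,j] = 0 for i > j (where C denotes the binomial coefficient), and let Λ(p) be the diagonal matrix with entries 1, (p-3)/(p-2), (p-4)/(p-2), ..., (p-J-1)/(p-2). Then L · R = I and M_J(p) = R · Λ(p) · L; in particular the eigenvectors of M_J(p) do not depend on p. -/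
open Finset

lemma altR (n : ℕ) : ∑ m ∈ range (n + 1), ((-1 : ℝ) ^ m * (n.choose m : ℝ)) =
    if n = 0 then 1 else 0 := by
  have h := congrArg (Int.cast : ℤ → ℝ) (Int.alternating_sum_range_choose (n := n))
  push_cast at h
  simpa [apply_ite (Int.cast : ℤ → ℝ)] using h

lemma altmR (n : ℕ) : ∑ m ∈ range (n + 1), ((-1 : ℝ) ^ m * (m : ℝ) * (n.choose m : ℝ)) =
    if n = 1 then -1 else 0 := by
  cases n with
  | zero => simp
  | succ n' =>
    rw [Finset.sum_range_succ']
    have hterm : ∀ l ∈ range (n' + 1),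
        (-1 : ℝ) ^ (l + 1) * ((l + 1 : ℕ) : ℝ) * ((n' + 1).choose (l + 1) : ℝ)
          = -((n' + 1 : ℕ) : ℝ) * ((-1 : ℝ) ^ l * (n'.choose l : ℝ)) := by
      intro l _
      have h := Nat.add_one_mul_choose_eq n' l
      have h' : ((n' + 1) * n'.choose l : ℕ) = ((n' + 1).choose (l + 1) * (l + 1) : ℕ) := h
      have h'' : ((n' + 1 : ℕ) : ℝ) * (n'.choose l : ℝ)
          = ((n' + 1).choose (l + 1) : ℝ) * ((l + 1 : ℕ) : ℝ) := by exact_mod_cast h'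
      push_cast [pow_succ] at *
      linear_combination ((-1:ℝ)^l) * h''
    rw [Finset.sum_congr rfl hterm, ← Finset.mul_sum, altR n']
    rcases Nat.eq_zero_or_pos n' with h0 | h0
    · subst h0; norm_num
    · have : n' ≠ 0 := h0.ne'
      simp [this, Nat.succ_ne_succ.mpr this]

lemma generic (g : ℕ → ℝ) {i k : ℕ} (hik : i ≤ k) :
    ∑ j ∈ range (k + 1), (-1 : ℝ) ^ (i + j) * g j * (j.choose i : ℝ) * (k.choose j : ℝ)
      = (k.choose i : ℝ) *
        ∑ m ∈ range (k - i + 1), (-1 : ℝ) ^ m * g (i + m) * ((k - i).choose m : ℝ) := by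
  rw [← Finset.sum_subset (s₁ := Finset.Ico i (k + 1)) (s₂ := range (k + 1))
      (by intro x hx; simp only [Finset.mem_Ico, Finset.mem_range] at *; omega)
      (by intro x hx hx'
          simp only [Finset.mem_Ico, Finset.mem_range, not_and, not_lt] at hx hx'
          have : x < i := by omega
          simp [Nat.choose_eq_zero_of_lt this])]
  rw [Finset.sum_Ico_eq_sum_range]
  have hcard : k + 1 - i = k - i + 1 := by omega
  rw [hcard, Finset.mul_sum]
  refine Finset.sum_congr rfl fun m hm => ?_
  simp only [Finset.mem_range] at hm
  have him : i + m ≤ k := by omega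
  have hch := Nat.choose_mul (n := k) (k := i + m) (s := i) (Nat.le_add_right i m)
  have hch' : (k.choose (i + m) : ℝ) * ((i + m).choose i : ℝ)
      = (k.choose i : ℝ) * ((k - i).choose (i + m - i) : ℝ) := by exact_mod_cast hch
  rw [Nat.add_sub_cancel_left] at hch'
  have hpow : (-1 : ℝ) ^ (i + (i + m)) = (-1 : ℝ) ^ m := by
    rw [show i + (i + m) = 2 * i + m by ring, pow_add, pow_mul]
    norm_num
  rw [hpow]
  linear_combination ((-1 : ℝ) ^ m * g (i + m)) * hch'

lemma sumA (i k : ℕ) :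
    ∑ j ∈ range (k + 1), (-1 : ℝ) ^ (i + j) * (j.choose i : ℝ) * (k.choose j : ℝ)
      = if i = k then 1 else 0 := by
  rcases le_or_gt i k with hik | hik
  · have := generic (fun _ => 1) hik
    simp only [mul_one, one_mul] at this
    rw [show (∑ j ∈ range (k + 1), (-1 : ℝ) ^ (i + j) * (j.choose i : ℝ) * (k.choose j : ℝ))
        = ∑ j ∈ range (k + 1), (-1 : ℝ) ^ (i + j) * (1 : ℝ) * (j.choose i : ℝ) * (k.choose j : ℝ)
        by simp [mul_one], generic (fun _ => 1) hik]
    simp only [mul_one]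
    rw [altR]
    rcases eq_or_lt_of_le hik with rfl | h
    · simp
    · have h1 : k - i ≠ 0 := by omega
      have h2 : i ≠ k := by omega
      simp [h1, h2]
  · rw [if_neg (by omega), Finset.sum_eq_zero]
    intro j hj
    simp only [Finset.mem_range] at hj
    have : j < i := by omega
    simp [Nat.choose_eq_zero_of_lt this]

lemma sumB (i k : ℕ) :
    ∑ j ∈ range (k + 1), (-1 : ℝ) ^ (i + j) * (j : ℝ) * (j.choose i : ℝ) * (k.choose j : ℝ)
      = if k = i then (i : ℝ) else if k = i + 1 then -((i : ℝ) + 1) else 0 := by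
  rcases le_or_gt i k with hik | hik
  · rw [generic (fun j => (j : ℝ)) hik]
    have hsplit : ∑ m ∈ range (k - i + 1), (-1 : ℝ) ^ m * ((i + m : ℕ) : ℝ) * ((k - i).choose m : ℝ)
        = (i : ℝ) * (∑ m ∈ range (k - i + 1), (-1 : ℝ) ^ m * ((k - i).choose m : ℝ))
          + ∑ m ∈ range (k - i + 1), (-1 : ℝ) ^ m * (m : ℝ) * ((k - i).choose m : ℝ) := by
      rw [Finset.mul_sum, ← Finset.sum_add_distrib]
      refine Finset.sum_congr rfl fun m _ => ?_
      push_cast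
      ring
    rw [hsplit, altR, altmR]
    rcases Nat.lt_or_ge i k with h | h
    · rcases eq_or_lt_of_le (Nat.succ_le_of_lt h) with heq | h2
      · have h1 : k - i = 1 := by omega
        have hk : k = i + 1 := by omega
        have : k.choose i = i + 1 := by rw [hk]; simp [Nat.choose_succ_self_right]
        rw [h1, this, hk]
        simp only [Nat.succ_ne_self, if_false, Nat.left_eq_add, one_ne_zero,
          if_true, eq_self_iff_true]
        push_cast
        ring
      · have h1 : k - i ≠ 0 := by omega
        have h1' : k - i ≠ 1 := by omega
        have h2' : k ≠ i := by omega
        have h3 : k ≠ i + 1 := by omega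
        simp [h1, h1', h2', h3]
    · have : i = k := le_antisymm hik h
      subst this
      simp
  · rw [if_neg (by omega), if_neg (by omega), Finset.sum_eq_zero]
    intro j hj
    simp only [Finset.mem_range] at hj
    have : j < i := by omega
    simp [Nat.choose_eq_zero_of_lt this]
/-- The `J × J` system matrix `M_J(p)`: its `(1,1)` entry is `1`, its `(i,i)` entry is
`(p - i - 1)/(p - 2)` for `2 ≤ i ≤ J`, its `(i, i+1)` entry is `i/(p - 2)` for
`1 ≤ i ≤ J - 1`, and all other entries are `0` (stated here with `0`-based indices). -/
noncomputable def Mmat (J : ℕ) (p : ℝ) : Matrix (Fin J) (Fin J) ℝ :=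
  Matrix.of fun i k =>
    if (k : ℕ) = (i : ℕ) + 1 then (((i : ℕ) : ℝ) + 1) / (p - 2)
    else if i = k then (if (i : ℕ) = 0 then 1 else (p - ((i : ℕ) : ℝ) - 2) / (p - 2))
    else 0

/-- Matrix of right eigenvectors: `R[i,j] = (-1)^(i+j) C(j-1, i-1)` for `i ≤ j`
(`1`-based), i.e. `(-1)^(i+j) C(j, i)` with `0`-based indices. -/
def Rmat (J : ℕ) : Matrix (Fin J) (Fin J) ℝ :=
  Matrix.of fun i k =>
    if (i : ℕ) ≤ (k : ℕ) then (-1 : ℝ) ^ ((i : ℕ) + (k : ℕ)) * (Nat.choose k i : ℝ) else 0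

/-- Matrix of left eigenvectors: `L[i,j] = C(j-1, i-1)` for `i ≤ j` (`1`-based). -/
def Lmat (J : ℕ) : Matrix (Fin J) (Fin J) ℝ :=
  Matrix.of fun i k =>
    if (i : ℕ) ≤ (k : ℕ) then (Nat.choose k i : ℝ) else 0

/-- The diagonal matrix of eigenvalues `1, (p-3)/(p-2), (p-4)/(p-2), …, (p-J-1)/(p-2)`. -/
noncomputable def Dmat (J : ℕ) (p : ℝ) : Matrix (Fin J) (Fin J) ℝ :=
  Matrix.diagonal fun i =>
    if (i : ℕ) = 0 then 1 else (p - ((i : ℕ) : ℝ) - 2) / (p - 2)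


theorem eigenstructure (J : ℕ) (hJ : 1 ≤ J) (p : ℝ) (hp : 2 < p) :
    Lmat J * Rmat J = 1 ∧ Mmat J p = Rmat J * Dmat J p * Lmat J := by
  have hp2 : p - 2 ≠ 0 := by linarith
  constructor
  · ext i k
    rw [Matrix.mul_apply, Matrix.one_apply]
    have hterm : ∀ j : Fin J, Lmat J i j * Rmat J j k
        = (-1 : ℝ) ^ ((j : ℕ) + (k : ℕ)) * ((j : ℕ).choose i : ℝ) * ((k : ℕ).choose j : ℝ) := by
      intro j
      simp only [Lmat, Rmat, Matrix.of_apply]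
      rcases le_or_gt (i : ℕ) (j : ℕ) with h1 | h1
      · rcases le_or_gt (j : ℕ) (k : ℕ) with h2 | h2
        · rw [if_pos h1, if_pos h2]; ring
        · rw [if_pos h1, if_neg (by omega), Nat.choose_eq_zero_of_lt h2]; simp
      · rw [if_neg (by omega), Nat.choose_eq_zero_of_lt h1]; simp
    rw [Finset.sum_congr rfl fun j _ => hterm j]
    rw [Fin.sum_univ_eq_sum_range
      (fun j => (-1 : ℝ) ^ (j + (k : ℕ)) * (j.choose i : ℝ) * ((k : ℕ).choose j : ℝ))]
    rw [← Finset.sum_subset (s₁ := range ((k : ℕ) + 1)) (s₂ := range J)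
        (by intro x hx; simp only [Finset.mem_range] at *; omega)
        (by intro x hx hx'
            simp only [Finset.mem_range, not_lt] at hx hx'
            have : (k : ℕ) < x := by omega
            simp [Nat.choose_eq_zero_of_lt this])]
    have hexp : ∀ j ∈ range ((k : ℕ) + 1),
        (-1 : ℝ) ^ (j + (k : ℕ)) * (j.choose i : ℝ) * ((k : ℕ).choose j : ℝ)
          = (-1 : ℝ) ^ ((i : ℕ) + (k : ℕ)) *
            ((-1 : ℝ) ^ ((i : ℕ) + j) * (j.choose i : ℝ) * ((k : ℕ).choose j : ℝ)) := by
      intro j _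
      have : (-1 : ℝ) ^ ((i : ℕ) + (k : ℕ)) * (-1 : ℝ) ^ ((i : ℕ) + j)
          = (-1 : ℝ) ^ (j + (k : ℕ)) := by
        rw [← pow_add, show (i : ℕ) + (k : ℕ) + ((i : ℕ) + j) = 2 * (i : ℕ) + (j + (k : ℕ)) by ring,
          pow_add, pow_mul]
        norm_num
      rw [← this]; ring
    rw [Finset.sum_congr rfl hexp, ← Finset.mul_sum, sumA]
    rcases eq_or_ne i k with rfl | hne
    · simp [← pow_add, pow_mul, show (i:ℕ)+(i:ℕ) = 2*(i:ℕ) by ring]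
    · have : (i : ℕ) ≠ (k : ℕ) := fun h => hne (Fin.ext h)
      simp [this, hne]
  · ext i k
    rw [Matrix.mul_assoc, Matrix.mul_apply]
    have hDL : ∀ j : Fin J, (Dmat J p * Lmat J) j k
        = (1 - ((j : ℕ) : ℝ) / (p - 2)) * (if (j : ℕ) ≤ (k : ℕ) then (((k : ℕ).choose j : ℕ) : ℝ) else 0) := by
      intro j
      rw [Dmat, Matrix.diagonal_mul]
      simp only [Lmat, Matrix.of_apply]
      congr 1
      rcases Nat.eq_zero_or_pos (j : ℕ) with h0 | h0
      · simp [h0]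
      · rw [if_neg h0.ne']
        field_simp
        ring
    have hterm : ∀ j : Fin J, Rmat J i j * (Dmat J p * Lmat J) j k
        = (-1 : ℝ) ^ ((i : ℕ) + (j : ℕ)) * ((j : ℕ).choose i : ℝ) * ((k : ℕ).choose j : ℝ)
          - (1 / (p - 2)) * ((-1 : ℝ) ^ ((i : ℕ) + (j : ℕ)) * ((j : ℕ) : ℝ)
              * ((j : ℕ).choose i : ℝ) * ((k : ℕ).choose j : ℝ)) := by
      intro j
      rw [hDL j]
      simp only [Rmat, Matrix.of_apply]
      rcases le_or_gt (i : ℕ) (j : ℕ) with h1 | h1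
      · rcases le_or_gt (j : ℕ) (k : ℕ) with h2 | h2
        · rw [if_pos h1, if_pos h2]; field_simp
        · rw [if_pos h1, if_neg (by omega), Nat.choose_eq_zero_of_lt h2]; simp
      · rw [if_neg (by omega), Nat.choose_eq_zero_of_lt h1]; simp
    rw [Finset.sum_congr rfl fun j _ => hterm j]
    rw [Fin.sum_univ_eq_sum_range (fun j =>
      (-1 : ℝ) ^ ((i : ℕ) + j) * (j.choose i : ℝ) * ((k : ℕ).choose j : ℝ)
        - (1 / (p - 2)) * ((-1 : ℝ) ^ ((i : ℕ) + j) * (j : ℝ)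
            * (j.choose i : ℝ) * ((k : ℕ).choose j : ℝ)))]
    rw [← Finset.sum_subset (s₁ := range ((k : ℕ) + 1)) (s₂ := range J)
        (by intro x hx; simp only [Finset.mem_range] at *; omega)
        (by intro x hx hx'
            simp only [Finset.mem_range, not_lt] at hx hx'
            have : (k : ℕ) < x := by omega
            simp [Nat.choose_eq_zero_of_lt this])]
    rw [Finset.sum_sub_distrib, ← Finset.mul_sum, sumA, sumB]
    simp only [Mmat, Matrix.of_apply]
    rcases eq_or_ne ((k : ℕ)) ((i : ℕ) + 1) with hk1 | hk1
    · rw [if_pos hk1, if_neg (by omega), if_neg (by omega), if_pos hk1]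
      field_simp
      ring
    · rw [if_neg hk1]
      rcases eq_or_ne i k with rfl | hne
      · rw [if_pos rfl, if_pos rfl, if_pos rfl]
        rcases Nat.eq_zero_or_pos (i : ℕ) with h0 | h0
        · rw [if_pos h0, h0]
          norm_num
        · rw [if_neg h0.ne']
          field_simp
          ring
      · have hne' : (i : ℕ) ≠ (k : ℕ) := fun h => hne (Fin.ext h)
        rw [if_neg hne, if_neg hne', if_neg (by omega), if_neg hk1]
        simp
end

section
/- Fix an integer J ≥ 1 and a prime p_0. As k → ∞, the ordered product M_J^k = M_J(q_k) · M_J(q_{k-1}) ··· M_J(q_1) converges entrywise to the J×J matrix whose first row consists entirely of 1's and whose remaining entries are all 0. -/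
/-- `prodMat J p0 k = M_J(q_k) ⬝ M_J(q_{k-1}) ⋯ M_J(q_1)`, where
`q_1 < q_2 < …` enumerate the primes greater than `p0`. -/
noncomputable def prodMat (J : ℕ) (p0 : ℕ) : ℕ → Matrix (Fin J) (Fin J) ℝ
  | 0 => 1
  | k + 1 => Mmat J ((Nat.nth (fun n => n.Prime ∧ p0 < n) k : ℕ) : ℝ) * prodMat J p0 k

open Filter Finset

section Aux

lemma aux_Pinf (p0 : ℕ) : (setOf fun n => n.Prime ∧ p0 < n).Infinite := by
  apply Set.infinite_of_not_bddAbove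
  rintro ⟨N, hN⟩
  obtain ⟨p, hp, hpp⟩ := Nat.exists_infinite_primes (max N p0 + 1)
  have hmem : p ∈ setOf fun n => n.Prime ∧ p0 < n :=
    ⟨hpp, lt_of_le_of_lt (le_max_right N p0) (Nat.lt_of_succ_le hp)⟩
  have := hN hmem
  have : N < p := lt_of_le_of_lt (le_max_left N p0) (Nat.lt_of_succ_le hp)
  omega

lemma aux_q_mem (p0 k : ℕ) : (Nat.nth (fun n => n.Prime ∧ p0 < n) k).Prime ∧
    p0 < Nat.nth (fun n => n.Prime ∧ p0 < n) k :=
  Nat.nth_mem_of_infinite (aux_Pinf p0) k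

lemma aux_q3 (p0 : ℕ) (hp0 : p0.Prime) (k : ℕ) :
    3 ≤ Nat.nth (fun n => n.Prime ∧ p0 < n) k := by
  have := aux_q_mem p0 k
  have := hp0.two_le
  omega

lemma aux_not_summable_q (p0 : ℕ) :
    ¬ Summable (fun k => (1:ℝ) / (Nat.nth (fun n => n.Prime ∧ p0 < n) k)) := by
  set P := fun n => n.Prime ∧ p0 < n with hP
  intro hs
  set f : ℕ → ℝ := fun n => 1 / n with hf
  have hq : Function.Injective (Nat.nth P) := Nat.nth_injective (aux_Pinf p0)
  have hrange : Set.range (Nat.nth P) = setOf P := Nat.range_nth_of_infinite (aux_Pinf p0)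
  have hS : Summable ((setOf P).indicator f) := by
    rw [← Function.Injective.summable_iff hq (by
      intro x hx
      rw [hrange] at hx
      exact Set.indicator_of_notMem hx f)]
    refine hs.congr fun k => ?_
    simp only [Function.comp_apply]
    rw [Set.indicator_of_mem (by exact aux_q_mem p0 k) f]
  have hT : Summable ((setOf fun n => n.Prime ∧ n ≤ p0).indicator f) := by
    apply summable_of_finite_support
    apply Set.Finite.subset (Set.finite_Icc 0 p0)
    intro x hx
    rw [Function.mem_support] at hx
    refine ⟨Nat.zero_le x, ?_⟩
    by_contra hle
    exact hx (Set.indicator_of_notMem (fun hm => hle hm.2) f)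
  have hunion : ({p | p.Prime}.indicator f) =
      ((setOf fun n => n.Prime ∧ n ≤ p0).indicator f) + ((setOf P).indicator f) := by
    funext n
    by_cases hn : n.Prime
    · by_cases h2 : n ≤ p0
      · rw [Pi.add_apply, Set.indicator_of_mem (show n ∈ {p | p.Prime} from hn),
          Set.indicator_of_mem (show n ∈ setOf fun n => n.Prime ∧ n ≤ p0 from ⟨hn, h2⟩),
          Set.indicator_of_notMem (show n ∉ setOf P from fun h => absurd h.2 (not_lt.mpr h2)),
          add_zero]
      · rw [Pi.add_apply, Set.indicator_of_mem (show n ∈ {p | p.Prime} from hn),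
          Set.indicator_of_notMem (show n ∉ setOf fun n => n.Prime ∧ n ≤ p0 from fun h => h2 h.2),
          Set.indicator_of_mem (show n ∈ setOf P from ⟨hn, not_le.mp h2⟩), zero_add]
    · rw [Pi.add_apply, Set.indicator_of_notMem (show n ∉ {p | p.Prime} from hn),
        Set.indicator_of_notMem (show n ∉ setOf fun n => n.Prime ∧ n ≤ p0 from fun h => hn h.1),
        Set.indicator_of_notMem (show n ∉ setOf P from fun h => hn h.1), add_zero]
  exact not_summable_one_div_on_primes (hunion ▸ hT.add hS)

lemma aux_not_summable_t (p0 : ℕ) (hp0 : p0.Prime) :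
    ¬ Summable (fun k => (1:ℝ) / ((Nat.nth (fun n => n.Prime ∧ p0 < n) k : ℝ) - 2)) := by
  intro hs
  apply aux_not_summable_q p0
  apply hs.of_nonneg_of_le (fun k => by positivity)
  intro k
  have h3' : (3:ℝ) ≤ (Nat.nth (fun n => n.Prime ∧ p0 < n) k : ℝ) := by
    exact_mod_cast aux_q3 p0 hp0 k
  apply one_div_le_one_div_of_le (by linarith) (by linarith)

lemma aux_sum_t_atTop (p0 : ℕ) (hp0 : p0.Prime) :
    Filter.Tendsto (fun n => ∑ k ∈ Finset.range n,
      (1:ℝ) / ((Nat.nth (fun n => n.Prime ∧ p0 < n) k : ℝ) - 2)) atTop atTop := by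
  refine (not_summable_iff_tendsto_nat_atTop_of_nonneg ?_).mp (aux_not_summable_t p0 hp0)
  intro k
  have h3' : (3:ℝ) ≤ (Nat.nth (fun n => n.Prime ∧ p0 < n) k : ℝ) := by
    exact_mod_cast aux_q3 p0 hp0 k
  exact le_of_lt (one_div_pos.mpr (by linarith))

lemma aux_t_tendsto (p0 : ℕ) (hp0 : p0.Prime) :
    Filter.Tendsto (fun k => (1:ℝ) / ((Nat.nth (fun n => n.Prime ∧ p0 < n) k : ℝ) - 2))
      atTop (nhds 0) := by
  have hmono : StrictMono (Nat.nth (fun n => n.Prime ∧ p0 < n)) :=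
    Nat.nth_strictMono (aux_Pinf p0)
  have h1 : Filter.Tendsto (fun k => ((Nat.nth (fun n => n.Prime ∧ p0 < n) k : ℝ) - 2))
      atTop atTop := by
    apply tendsto_atTop_add_const_right
    exact tendsto_natCast_atTop_atTop.comp hmono.tendsto_atTop
  simp only [one_div]; exact h1.inv_tendsto_atTop

lemma lemmaA (t a b : ℕ → ℝ) (α β : ℝ) (hα : 0 < α) (hβ : 0 ≤ β)
    (ht0 : ∀ k, 0 < t k) (htlim : Filter.Tendsto t atTop (nhds 0))
    (htsum : Filter.Tendsto (fun n => ∑ k ∈ Finset.range n, t k) atTop atTop)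
    (hrec : ∀ k, a (k+1) = (1 - α * t k) * a k + β * t k * b k)
    (hb : Filter.Tendsto b atTop (nhds 0)) :
    Filter.Tendsto a atTop (nhds 0) := by
  rw [Metric.tendsto_atTop]
  intro ε hε
  set δ := α * ε / (2 * (β + 1)) with hδ
  have hδpos : 0 < δ := by positivity
  have h1 : ∀ᶠ k in atTop, |b k| ≤ δ := by
    have := (Metric.tendsto_atTop.mp hb) δ hδpos
    obtain ⟨N, hN⟩ := this
    exact eventually_atTop.mpr ⟨N, fun k hk => le_of_lt (by simpa [Real.dist_eq] using hN k hk)⟩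
  have h2 : ∀ᶠ k in atTop, α * t k ≤ 1 := by
    have : Filter.Tendsto (fun k => α * t k) atTop (nhds (α * 0)) := htlim.const_mul α
    rw [mul_zero] at this
    exact this.eventually_le_const (by norm_num)
  obtain ⟨K, hK⟩ := eventually_atTop.mp (h1.and h2)
  set E : ℕ → ℝ := fun k => ∏ m ∈ Finset.Ico K k, (1 - α * t m) with hE
  have hE0 : ∀ k, 0 ≤ E k := by
    intro k
    apply Finset.prod_nonneg
    intro m hm
    have := (hK m (Finset.mem_Ico.mp hm).1).2
    linarith
  have hclaim : ∀ k, K ≤ k → |a k| ≤ ε/2 + |a K| * E k := by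
    intro k hk
    induction k, hk using Nat.le_induction with
    | base =>
      have : E K = 1 := by simp [hE]
      rw [this]
      have := abs_nonneg (a K)
      linarith
    | succ k hk ih =>
      have hbk := (hK k hk).1
      have htk1 := (hK k hk).2
      have htkpos := ht0 k
      have hEsucc : E (k+1) = E k * (1 - α * t k) := by
        rw [hE]
        exact Finset.prod_Ico_succ_top hk _
      have step1 : |a (k+1)| ≤ (1 - α * t k) * |a k| + β * t k * |b k| := by
        rw [hrec k]
        calc |(1 - α * t k) * a k + β * t k * b k|
            ≤ |(1 - α * t k) * a k| + |β * t k * b k| := abs_add_le _ _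
          _ = (1 - α * t k) * |a k| + β * t k * |b k| := by
              rw [abs_mul, abs_mul, abs_of_nonneg (by linarith),
                abs_of_nonneg (mul_nonneg hβ htkpos.le)]
      have step2 : (1 - α * t k) * |a k| ≤ (1 - α * t k) * (ε/2 + |a K| * E k) :=
        mul_le_mul_of_nonneg_left ih (by linarith)
      have step3 : β * t k * |b k| ≤ β * t k * δ :=
        mul_le_mul_of_nonneg_left hbk (mul_nonneg hβ htkpos.le)
      have hβδ : β * δ ≤ α * ε / 2 := by
        have hβ1 : (0:ℝ) < 2 * (β + 1) := by linarith
        rw [hδ, ← mul_div_assoc, div_le_iff₀ hβ1]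
        have : α * ε / 2 * (2 * (β + 1)) = α * ε * (β + 1) := by ring
        rw [this]
        nlinarith
      rw [hEsucc]
      have hEk := hE0 k
      have haK := abs_nonneg (a K)
      nlinarith [mul_le_mul_of_nonneg_left hβδ (le_of_lt htkpos)]
  set S : ℕ → ℝ := fun n => ∑ m ∈ Finset.range n, t m with hS
  have hEexp : ∀ k, K ≤ k → E k ≤ Real.exp (-(α * (S k - S K))) := by
    intro k hk
    have h0 : E k ≤ ∏ m ∈ Finset.Ico K k, Real.exp (-(α * t m)) := by
      apply Finset.prod_le_prod
      · intro m hm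
        have := (hK m (Finset.mem_Ico.mp hm).1).2
        linarith
      · intro m hm
        have := Real.add_one_le_exp (-(α * t m))
        linarith
    refine h0.trans (le_of_eq ?_)
    rw [← Real.exp_sum]
    congr 1
    have hsub : S k - S K = ∑ m ∈ Finset.Ico K k, t m :=
      (Finset.sum_Ico_eq_sub _ hk).symm
    rw [hsub, Finset.mul_sum]
    exact Finset.sum_neg_distrib _
  have hEtend : Filter.Tendsto (fun k => |a K| * E k) atTop (nhds 0) := by
    have hexp : Filter.Tendsto (fun k => Real.exp (-(α * (S k - S K)))) atTop (nhds 0) := by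
      apply Real.tendsto_exp_atBot.comp
      have h1 : Filter.Tendsto (fun k => S k - S K) atTop atTop :=
        tendsto_atTop_add_const_right _ (-S K) (by simpa [sub_eq_add_neg] using htsum)
      have := h1.const_mul_atTop hα
      exact tendsto_neg_atBot_iff.mpr this
    have hsq : Filter.Tendsto E atTop (nhds 0) := by
      apply squeeze_zero' (Eventually.of_forall hE0) _ hexp
      exact eventually_atTop.mpr ⟨K, hEexp⟩
    simpa using hsq.const_mul (|a K|)
  have hfin : ∀ᶠ k in atTop, |a K| * E k < ε / 2 :=
    hEtend.eventually_lt_const (by linarith)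
  obtain ⟨N, hN⟩ := eventually_atTop.mp hfin
  refine ⟨max K N, fun k hk => ?_⟩
  have hk1 : K ≤ k := le_trans (le_max_left _ _) hk
  have hk2 : N ≤ k := le_trans (le_max_right _ _) hk
  have := hclaim k hk1
  have := hN k hk2
  rw [Real.dist_eq, sub_zero]
  linarith

lemma row_formula (J : ℕ) (p : ℝ) (i : Fin J) (v : Fin J → ℝ) :
    ∑ l, Mmat J p i l * v l =
      (if (i:ℕ) = 0 then 1 else (p - ((i:ℕ):ℝ) - 2) / (p - 2)) * v i
      + (if h : (i:ℕ)+1 < J then (((i:ℕ):ℝ)+1) / (p - 2) * v ⟨(i:ℕ)+1, h⟩ else 0) := by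
  by_cases h : (i:ℕ)+1 < J
  · rw [dif_pos h]
    set i' : Fin J := ⟨(i:ℕ)+1, h⟩ with hi'
    have hne : i ≠ i' := by
      intro he
      have := congrArg Fin.val he
      simp [hi'] at this
    have hfun : ∀ l, Mmat J p i l * v l =
        (if l = i then ((if (i:ℕ) = 0 then 1 else (p - ((i:ℕ):ℝ) - 2)/(p-2)) * v l) else 0)
        + (if l = i' then (((i:ℕ):ℝ)+1)/(p-2) * v l else 0) := by
      intro l
      simp only [Mmat, Matrix.of_apply]
      by_cases hl : l = i'
      · subst hl
        rw [if_pos (show ((i':Fin J):ℕ) = (i:ℕ)+1 by simp [hi']),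
          if_neg (fun hc => hne hc.symm), if_pos rfl]
        ring
      · have hl2 : ¬ ((l:ℕ) = (i:ℕ) + 1) := by
          intro hc; exact hl (Fin.ext (by simp [hi', hc]))
        rw [if_neg hl2, if_neg hl]
        by_cases hli : l = i
        · subst hli; rw [if_pos rfl, if_pos rfl]; ring
        · rw [if_neg (fun hc => hli hc.symm), if_neg hli]; ring
    rw [Finset.sum_congr rfl (fun l _ => hfun l), Finset.sum_add_distrib]
    simp
  · rw [dif_neg h]
    have hfun : ∀ l, Mmat J p i l * v l =
        (if l = i then ((if (i:ℕ) = 0 then 1 else (p - ((i:ℕ):ℝ) - 2)/(p-2)) * v l) else 0) := by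
      intro l
      simp only [Mmat, Matrix.of_apply]
      have hl2 : ¬ ((l:ℕ) = (i:ℕ) + 1) := fun hc => h (hc ▸ l.isLt)
      rw [if_neg hl2]
      by_cases hli : l = i
      · subst hli; rw [if_pos rfl, if_pos rfl]
      · rw [if_neg (fun hc => hli hc.symm), if_neg hli]; ring
    rw [Finset.sum_congr rfl (fun l _ => hfun l)]
    simp

lemma col_sum (J : ℕ) (p : ℝ) (hp : p - 2 ≠ 0) (j : Fin J) :
    ∑ i, Mmat J p i j = 1 := by
  rcases Nat.eq_zero_or_pos (j:ℕ) with hj | hj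
  · have hfun : ∀ i, Mmat J p i j = if i = j then 1 else 0 := by
      intro i
      simp only [Mmat, Matrix.of_apply]
      rw [if_neg (by omega)]
      by_cases hij : i = j
      · subst hij; rw [if_pos rfl, if_pos rfl, if_pos hj]
      · rw [if_neg hij, if_neg hij]
    rw [Finset.sum_congr rfl (fun i _ => hfun i)]
    simp
  · set i0 : Fin J := ⟨(j:ℕ) - 1, by omega⟩ with hi0
    have hne : i0 ≠ j := by
      intro he
      have := congrArg Fin.val he
      simp [hi0] at this
      omega
    have hfun : ∀ i, Mmat J p i j =
        (if i = i0 then (((i0:ℕ):ℝ)+1)/(p-2) else 0)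
        + (if i = j then (p - ((j:ℕ):ℝ) - 2)/(p-2) else 0) := by
      intro i
      simp only [Mmat, Matrix.of_apply]
      by_cases hi : i = i0
      · subst hi
        rw [if_pos (show ((j:Fin J):ℕ) = ((i0:Fin J):ℕ)+1 by simp [hi0]; omega),
          if_pos rfl, if_neg hne]
        ring
      · have hi2 : ¬ ((j:ℕ) = (i:ℕ) + 1) := by
          intro hc; exact hi (Fin.ext (by simp [hi0, hc]))
        rw [if_neg hi2, if_neg hi]
        by_cases hij : i = j
        · subst hij
          rw [if_pos rfl, if_pos rfl, if_neg (by omega)]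
          ring
        · rw [if_neg hij, if_neg (fun hc => hij hc)]
          ring
    rw [Finset.sum_congr rfl (fun i _ => hfun i), Finset.sum_add_distrib]
    simp only [Finset.sum_ite_eq', Finset.mem_univ, if_true]
    have hval : ((i0:ℕ):ℝ) + 1 = ((j:ℕ):ℝ) := by
      have h1 : (i0:ℕ) = (j:ℕ) - 1 := rfl
      rw [h1]
      have h2 : (j:ℕ) - 1 + 1 = (j:ℕ) := by omega
      exact_mod_cast congrArg (Nat.cast : ℕ → ℝ) h2
    rw [hval, ← add_div]
    field_simp
    ring

lemma prod_colsum (J : ℕ) (p0 : ℕ) (hp0 : p0.Prime) (k : ℕ) (j : Fin J) :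
    ∑ i, prodMat J p0 k i j = 1 := by
  induction k with
  | zero =>
    simp only [prodMat, Matrix.one_apply]
    simp
  | succ k ih =>
    have hq3 : (3:ℝ) ≤ (Nat.nth (fun n => n.Prime ∧ p0 < n) k : ℝ) := by
      exact_mod_cast aux_q3 p0 hp0 k
    have hp : ((Nat.nth (fun n => n.Prime ∧ p0 < n) k : ℝ)) - 2 ≠ 0 := by linarith
    simp only [prodMat, Matrix.mul_apply]
    rw [Finset.sum_comm]
    have : ∀ l, ∑ i, Mmat J (Nat.nth (fun n => n.Prime ∧ p0 < n) k : ℝ) i l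
        * prodMat J p0 k l j = prodMat J p0 k l j := by
      intro l
      rw [← Finset.sum_mul, col_sum J _ hp l, one_mul]
    rw [Finset.sum_congr rfl (fun l _ => this l)]
    exact ih

lemma entry_tendsto (J : ℕ) (p0 : ℕ) (hp0 : p0.Prime) :
    ∀ n : ℕ, ∀ i : Fin J, (i:ℕ) ≠ 0 → J - (i:ℕ) = n + 1 →
      ∀ j : Fin J, Filter.Tendsto (fun k => prodMat J p0 k i j) atTop (nhds 0) := by
  have hq3 : ∀ k, (3:ℝ) ≤ (Nat.nth (fun n => n.Prime ∧ p0 < n) k : ℝ) := fun k => by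
    exact_mod_cast aux_q3 p0 hp0 k
  have ht0 : ∀ k, 0 < (1:ℝ) / ((Nat.nth (fun n => n.Prime ∧ p0 < n) k : ℝ) - 2) := fun k =>
    one_div_pos.mpr (by linarith [hq3 k])
  have hd : ∀ k (i : Fin J), (i:ℕ) ≠ 0 →
      ((Nat.nth (fun n => n.Prime ∧ p0 < n) k : ℝ) - ((i:ℕ):ℝ) - 2)
        / ((Nat.nth (fun n => n.Prime ∧ p0 < n) k : ℝ) - 2)
      = 1 - ((i:ℕ):ℝ) * ((1:ℝ) / ((Nat.nth (fun n => n.Prime ∧ p0 < n) k : ℝ) - 2)) := by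
    intro k i _
    have hne : ((Nat.nth (fun n => n.Prime ∧ p0 < n) k : ℝ)) - 2 ≠ 0 := by linarith [hq3 k]
    field_simp
    ring
  intro n
  induction n with
  | zero =>
    intro i hi0 hJi j
    have hlast : ¬ ((i:ℕ) + 1 < J) := by have := i.isLt; omega
    apply lemmaA (fun k => (1:ℝ) / ((Nat.nth (fun n => n.Prime ∧ p0 < n) k : ℝ) - 2))
      _ (fun _ => 0) ((i:ℕ):ℝ) 0
      (by exact_mod_cast Nat.pos_of_ne_zero hi0) le_rfl ht0
      (aux_t_tendsto p0 hp0) (aux_sum_t_atTop p0 hp0) _ tendsto_const_nhds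
    intro k
    show prodMat J p0 (k+1) i j = _
    simp only [prodMat, Matrix.mul_apply]
    rw [row_formula, dif_neg hlast, if_neg hi0, hd k i hi0]
    ring
  | succ n ihn =>
    intro i hi0 hJi j
    have hlt : (i:ℕ) + 1 < J := by omega
    set i' : Fin J := ⟨(i:ℕ)+1, hlt⟩ with hi'
    have hb : Filter.Tendsto (fun k => prodMat J p0 k i' j) atTop (nhds 0) :=
      ihn i' (by simp [hi']) (by simp [hi']; omega) j
    apply lemmaA (fun k => (1:ℝ) / ((Nat.nth (fun n => n.Prime ∧ p0 < n) k : ℝ) - 2))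
      _ (fun k => prodMat J p0 k i' j) ((i:ℕ):ℝ) (((i:ℕ):ℝ)+1)
      (by exact_mod_cast Nat.pos_of_ne_zero hi0) (by positivity) ht0
      (aux_t_tendsto p0 hp0) (aux_sum_t_atTop p0 hp0) _ hb
    intro k
    show prodMat J p0 (k+1) i j = _
    simp only [prodMat, Matrix.mul_apply]
    rw [row_formula, dif_pos hlt, if_neg hi0, hd k i hi0]
    ring

end Aux

theorem prodMat_tendsto (J : ℕ) (hJ : 1 ≤ J) (p0 : ℕ) (hp0 : p0.Prime) :
    Filter.Tendsto (prodMat J p0) Filter.atTop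
      (nhds (Matrix.of fun i _ : Fin J => if (i : ℕ) = 0 then (1 : ℝ) else 0)) := by
  refine tendsto_pi_nhds.mpr ?_
  intro i
  rw [tendsto_pi_nhds]
  intro j
  simp only [Matrix.of_apply]
  by_cases hi : (i:ℕ) = 0
  · rw [if_pos hi]
    have hsum : ∀ k, prodMat J p0 k i j
        = 1 - ∑ l ∈ Finset.univ.erase i, prodMat J p0 k l j := by
      intro k
      have := prod_colsum J p0 hp0 k j
      rw [← Finset.add_sum_erase _ _ (Finset.mem_univ i)] at this
      linarith
    have htail : Filter.Tendsto
        (fun k => ∑ l ∈ Finset.univ.erase i, prodMat J p0 k l j)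
        atTop (nhds 0) := by
      have : Filter.Tendsto
          (fun k => ∑ l ∈ Finset.univ.erase i, prodMat J p0 k l j)
          atTop (nhds (∑ l ∈ Finset.univ.erase i, (0:ℝ))) := by
        apply tendsto_finset_sum
        intro l hl
        have hl0 : (l:ℕ) ≠ 0 := by
          intro hc
          exact (Finset.mem_erase.mp hl).1 (Fin.ext (by simp [hc, hi]))
        exact entry_tendsto J p0 hp0 (J - (l:ℕ) - 1) l hl0 (by have := l.isLt; omega) j
      simpa using this
    have := (tendsto_const_nhds (x := (1:ℝ)) (f := atTop)).sub htail
    rw [sub_zero] at this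
    exact this.congr (fun k => (hsum k).symm)
  · rw [if_neg hi]
    exact entry_tendsto J p0 hp0 (J - (i:ℕ) - 1) i hi (by have := i.isLt; omega) j
end

section
/- Fix an integer J ≥ 1, a prime p_0, and a vector w_0 ∈ ℝ^J. Then the first component of M_J^k · w_0 converges, as k → ∞, to the sum of the components of w_0: lim_{k→∞} (M_J^k · w_0)_1 = Σ_{j=1}^{J} (w_0)_j. -/
open Filter

lemma Mmat_diag {J : ℕ} (p : ℝ) (i : Fin J) :
    Mmat J p i i = if (i : ℕ) = 0 then 1 else (p - ((i : ℕ) : ℝ) - 2) / (p - 2) := by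
  simp [Mmat]

lemma Mmat_super {J : ℕ} (p : ℝ) (i j : Fin J) (hj : (j : ℕ) = (i : ℕ) + 1) :
    Mmat J p i j = (((i : ℕ) : ℝ) + 1) / (p - 2) := by
  simp [Mmat, hj]

lemma Mmat_zero {J : ℕ} (p : ℝ) (i j : Fin J) (h1 : (j : ℕ) ≠ (i : ℕ) + 1) (h2 : i ≠ j) :
    Mmat J p i j = 0 := by
  simp [Mmat, h1, h2]

lemma fin_sum_eq_pair {J : ℕ} (f : Fin J → ℝ) (i j : Fin J) (hij : i ≠ j)
    (h : ∀ k, k ≠ i → k ≠ j → f k = 0) : ∑ k, f k = f i + f j := by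
  have hs := Finset.sum_subset (Finset.subset_univ ({i, j} : Finset (Fin J)))
    (fun k _ hk => by
      simp only [Finset.mem_insert, Finset.mem_singleton, not_or] at hk
      exact h k hk.1 hk.2)
  rw [← hs, Finset.sum_pair hij]

lemma Mmat_mulVec {J : ℕ} (p : ℝ) (v : Fin J → ℝ) (i : Fin J) :
    (Mmat J p).mulVec v i
      = (if (i : ℕ) = 0 then 1 else (p - ((i : ℕ) : ℝ) - 2) / (p - 2)) * v i
        + (if h : (i : ℕ) + 1 < J then (((i : ℕ) : ℝ) + 1) / (p - 2) * v ⟨(i : ℕ) + 1, h⟩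
           else 0) := by
  have hmv : (Mmat J p).mulVec v i = ∑ j, Mmat J p i j * v j := rfl
  by_cases h : (i : ℕ) + 1 < J
  · set i' : Fin J := ⟨(i : ℕ) + 1, h⟩ with hi'
    have hne : i ≠ i' := by
      intro he
      have : (i : ℕ) = ((i' : Fin J) : ℕ) := congrArg Fin.val he
      simp only [hi'] at this
      omega
    rw [hmv, fin_sum_eq_pair _ i i' hne (fun k hk1 hk2 => by
      rw [Mmat_zero p i k (fun hc => hk2 (Fin.ext hc)) (fun hc => hk1 hc.symm), zero_mul])]
    rw [dif_pos h, Mmat_diag, Mmat_super p i i' rfl]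
  · rw [hmv, dif_neg h, add_zero, Finset.sum_eq_single i]
    · rw [Mmat_diag]
    · intro b _ hb
      rw [Mmat_zero p i b (fun hc => h (hc ▸ b.isLt)) (fun hc => hb hc.symm), zero_mul]
    · intro hb; exact absurd (Finset.mem_univ i) hb

lemma Mmat_colsum {J : ℕ} {p : ℝ} (hp : p - 2 ≠ 0) (j : Fin J) :
    ∑ i, Mmat J p i j = 1 := by
  rcases Nat.eq_zero_or_pos (j : ℕ) with hj | hj
  · rw [Finset.sum_eq_single j]
    · rw [Mmat_diag, if_pos hj]
    · intro b _ hb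
      exact Mmat_zero p b j (by omega) hb
    · intro hb; exact absurd (Finset.mem_univ j) hb
  · have hjJ : (j : ℕ) - 1 < J := by omega
    set j' : Fin J := ⟨(j : ℕ) - 1, hjJ⟩ with hj'
    have hne : j' ≠ j := by
      intro he
      have : ((j' : Fin J) : ℕ) = (j : ℕ) := by rw [he]
      simp only [hj'] at this
      omega
    rw [fin_sum_eq_pair _ j' j hne (fun k hk1 hk2 => by
      refine Mmat_zero p k j (fun hc => hk1 (Fin.ext ?_)) (fun hc => hk2 hc)
      simp only [hj']; omega)]
    rw [Mmat_super p j' j (by simp only [hj']; omega), Mmat_diag, if_neg (by omega)]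
    have hcast : (((j' : Fin J) : ℕ) : ℝ) = ((j : ℕ) : ℝ) - 1 := by
      simp only [hj']
      push_cast [Nat.cast_sub hj]
      ring
    rw [hcast]
    field_simp
    ring

lemma Mmat_mulVec_sum {J : ℕ} {p : ℝ} (hp : p - 2 ≠ 0) (v : Fin J → ℝ) :
    ∑ i, (Mmat J p).mulVec v i = ∑ j, v j := by
  have hmv : ∀ i, (Mmat J p).mulVec v i = ∑ j, Mmat J p i j * v j := fun _ => rfl
  simp_rw [hmv]
  rw [Finset.sum_comm]
  simp_rw [← Finset.sum_mul, Mmat_colsum hp, one_mul]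


lemma prod_tendsto_zero (a d : ℕ → ℝ) (m : ℕ)
    (hd0 : ∀ k, 0 ≤ d k)
    (ha0 : ∀ k, m ≤ k → 0 ≤ a k)
    (had : ∀ k, m ≤ k → a k ≤ 1 - d k)
    (hdiv : Tendsto (fun n => ∑ k ∈ Finset.range n, d k) atTop atTop) :
    Tendsto (fun n => ∏ k ∈ Finset.Ico m n, a k) atTop (nhds 0) := by
  have hub : ∀ n, m ≤ n →
      ∏ k ∈ Finset.Ico m n, a k ≤ Real.exp (-(∑ k ∈ Finset.Ico m n, d k)) := by
    intro n hn
    calc ∏ k ∈ Finset.Ico m n, a k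
        ≤ ∏ k ∈ Finset.Ico m n, Real.exp (-(d k)) := by
          refine Finset.prod_le_prod (fun k hk => ha0 k (Finset.mem_Ico.mp hk).1) ?_
          intro k hk
          have h1 := had k (Finset.mem_Ico.mp hk).1
          have h2 := Real.add_one_le_exp (-(d k))
          linarith
      _ = Real.exp (∑ k ∈ Finset.Ico m n, -(d k)) := (Real.exp_sum _ _).symm
      _ = Real.exp (-(∑ k ∈ Finset.Ico m n, d k)) := by rw [Finset.sum_neg_distrib]
  have hlb : ∀ n, m ≤ n → (0:ℝ) ≤ ∏ k ∈ Finset.Ico m n, a k := fun n hn =>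
    Finset.prod_nonneg fun k hk => ha0 k (Finset.mem_Ico.mp hk).1
  have htail : Tendsto (fun n => ∑ k ∈ Finset.Ico m n, d k) atTop atTop := by
    have h1 : Tendsto (fun n => (∑ k ∈ Finset.range n, d k) - ∑ k ∈ Finset.range m, d k)
        atTop atTop := tendsto_atTop_add_const_right _ _ hdiv
    refine h1.congr' ?_
    filter_upwards [eventually_ge_atTop m] with n hn
    rw [Finset.sum_Ico_eq_sub _ hn]
  have hexp : Tendsto (fun n => Real.exp (-(∑ k ∈ Finset.Ico m n, d k))) atTop (nhds 0) :=
    Real.tendsto_exp_atBot.comp (tendsto_neg_atBot_iff.mpr htail)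
  refine tendsto_of_tendsto_of_tendsto_of_le_of_le' tendsto_const_nhds hexp ?_ ?_
  · filter_upwards [eventually_ge_atTop m] with n hn using hlb n hn
  · filter_upwards [eventually_ge_atTop m] with n hn using hub n hn

lemma iter_tendsto_zero (x a e : ℕ → ℝ) (C : ℝ) (hC : 0 < C) (N0 : ℕ)
    (hrec : ∀ k, N0 ≤ k → |x (k+1)| ≤ a k * |x k| + C * (1 - a k) * e k)
    (ha : ∀ k, N0 ≤ k → 0 ≤ a k ∧ a k ≤ 1)
    (he0 : ∀ k, 0 ≤ e k)
    (he : Tendsto e atTop (nhds 0))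
    (hprod : ∀ m, N0 ≤ m →
      Tendsto (fun n => ∏ k ∈ Finset.Ico m n, a k) atTop (nhds 0)) :
    Tendsto x atTop (nhds 0) := by
  rw [Metric.tendsto_atTop]
  intro ε hε
  set δ : ℝ := ε / (3 * C) with hδdef
  have hδ0 : 0 < δ := by positivity
  obtain ⟨m1, hm1⟩ := Metric.tendsto_atTop.mp he δ hδ0
  set m := max N0 m1 with hmdef
  have hmN0 : N0 ≤ m := le_max_left _ _
  have key : ∀ n, m ≤ n → |x n| ≤ (∏ k ∈ Finset.Ico m n, a k) * |x m|
      + C * δ * (1 - ∏ k ∈ Finset.Ico m n, a k) := by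
    intro n hn
    induction n, hn using Nat.le_induction with
    | base => simp
    | succ n hn ih =>
      have han := ha n (le_trans hmN0 hn)
      have hen : e n ≤ δ := by
        have := hm1 n (le_trans (le_max_right _ _) hn)
        rw [Real.dist_eq, sub_zero] at this
        exact le_of_lt (lt_of_le_of_lt (le_abs_self _) this)
      have hP0 : 0 ≤ ∏ k ∈ Finset.Ico m n, a k :=
        Finset.prod_nonneg fun k hk => (ha k (le_trans hmN0 (Finset.mem_Ico.mp hk).1)).1
      have step1 : |x (n+1)| ≤ a n * |x n| + C * (1 - a n) * e n := hrec n (le_trans hmN0 hn)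
      have step2 : a n * |x n| ≤ a n * ((∏ k ∈ Finset.Ico m n, a k) * |x m|
          + C * δ * (1 - ∏ k ∈ Finset.Ico m n, a k)) :=
        mul_le_mul_of_nonneg_left ih han.1
      have step3 : C * (1 - a n) * e n ≤ C * (1 - a n) * δ :=
        mul_le_mul_of_nonneg_left hen (by nlinarith [han.2])
      rw [Finset.prod_Ico_succ_top hn]
      nlinarith [step1, step2, step3]
  have hCδ : C * δ = ε / 3 := by
    rw [hδdef]; field_simp
  have h2 : Tendsto (fun n => (∏ k ∈ Finset.Ico m n, a k) * |x m|) atTop (nhds 0) := by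
    simpa using (hprod m hmN0).mul_const |x m|
  obtain ⟨N, hN⟩ := Metric.tendsto_atTop.mp h2 (ε/3) (by positivity)
  refine ⟨max m N, fun n hn => ?_⟩
  have h3 := key n (le_trans (le_max_left _ _) hn)
  have h4 := hN n (le_trans (le_max_right _ _) hn)
  rw [Real.dist_eq, sub_zero] at h4 ⊢
  have hPn0 : 0 ≤ ∏ k ∈ Finset.Ico m n, a k :=
    Finset.prod_nonneg fun k hk => (ha k (le_trans hmN0 (Finset.mem_Ico.mp hk).1)).1
  have h5 : (∏ k ∈ Finset.Ico m n, a k) * |x m| < ε / 3 :=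
    lt_of_le_of_lt (le_abs_self _) h4
  have h6 : C * δ * (1 - ∏ k ∈ Finset.Ico m n, a k) ≤ C * δ := by nlinarith
  have h7 : |x n| < ε / 3 + ε / 3 := by linarith [h3, h5, h6, hCδ.le]
  calc |x n| < ε / 3 + ε / 3 := h7
    _ < ε := by linarith


lemma qdiv (p0 : ℕ) (hp0 : p0.Prime) :
    Tendsto (fun n => ∑ k ∈ Finset.range n,
      (1 : ℝ) / ((Nat.nth (fun n => n.Prime ∧ p0 < n) k : ℝ) - 2)) atTop atTop := by
  set P : ℕ → Prop := fun n => n.Prime ∧ p0 < n with hP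
  have hinf : (setOf P).Infinite := by
    have hset : setOf P = {n | n.Prime} \ {n | n ≤ p0} := by
      ext n; simp [hP, not_le]; exact Iff.rfl
    rw [hset]
    exact Nat.infinite_setOf_prime.diff (Set.finite_le_nat p0)
  set q := Nat.nth P with hq
  have hqmem : ∀ k, (q k).Prime ∧ p0 < q k := fun k => Nat.nth_mem_of_infinite hinf k
  have hq3 : ∀ k, 3 ≤ q k := by
    intro k
    have h1 := (hqmem k).1.two_le
    have h2 := (hqmem k).2
    have h3 := hp0.two_le
    omega
  have hq2 : ∀ k, (1:ℝ) ≤ (q k : ℝ) - 2 := by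
    intro k
    have : (3:ℝ) ≤ (q k : ℝ) := by exact_mod_cast hq3 k
    linarith
  have hd0 : ∀ k, (0:ℝ) ≤ 1 / ((q k : ℝ) - 2) := fun k => by
    have := hq2 k; positivity
  rw [← not_summable_iff_tendsto_nat_atTop_of_nonneg hd0]
  intro hs
  have h1 : Summable (fun k => (1:ℝ) / (q k : ℝ)) := by
    refine hs.of_nonneg_of_le (fun k => by positivity) (fun k => ?_)
    have h := hq2 k
    exact one_div_le_one_div_of_le (by linarith) (by linarith)
  set f : ℕ → ℝ := Set.indicator {p | p.Prime} (fun n => 1 / (n : ℝ)) with hf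
  have hqinj : Function.Injective q := (Nat.nth_strictMono hinf).injective
  have hrange : Set.range q = setOf P := Nat.range_nth_of_infinite hinf
  have hfq : ∀ k, f (q k) = 1 / (q k : ℝ) := fun k =>
    Set.indicator_of_mem (hqmem k).1 _
  have h2 : Summable ((Set.range q).indicator f) := by
    rw [← Function.Injective.summable_iff hqinj
      (fun x hx => Set.indicator_of_notMem hx f)]
    refine h1.congr fun k => ?_
    simp only [Function.comp_apply, Set.indicator_of_mem (Set.mem_range_self k), hfq k]
  have h3 : Summable ((Set.range q)ᶜ.indicator f) := by
    apply summable_of_finite_support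
    refine Set.Finite.subset (Set.finite_le_nat p0) ?_
    intro n hn
    simp only [Function.mem_support] at hn
    by_contra hle
    simp only [Set.mem_setOf_eq, not_le] at hle
    by_cases hnp : n.Prime
    · have hnP : n ∈ Set.range q := by rw [hrange]; exact ⟨hnp, hle⟩
      rw [Set.indicator_of_notMem (by simpa using hnP)] at hn
      exact hn rfl
    · have hfn : f n = 0 := Set.indicator_of_notMem hnp _
      have : (Set.range q)ᶜ.indicator f n = 0 := by
        by_cases hm : n ∈ (Set.range q)ᶜ
        · rw [Set.indicator_of_mem hm, hfn]
        · exact Set.indicator_of_notMem hm f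
      exact hn this
  have h4 : Summable f := by
    have := h2.add h3
    refine this.congr fun n => ?_
    have := Set.indicator_self_add_compl (Set.range q) f
    exact congrFun this n
  exact not_summable_one_div_on_primes h4


theorem first_component_tendsto (J : ℕ) (hJ : 1 ≤ J) (p0 : ℕ) (hp0 : p0.Prime)
    (w0 : Fin J → ℝ) :
    Filter.Tendsto (fun k => (prodMat J p0 k).mulVec w0 ⟨0, hJ⟩) Filter.atTop
      (nhds (∑ j, w0 j)) := by
  classical
  set P : ℕ → Prop := fun n => n.Prime ∧ p0 < n with hP
  have hinf : (setOf P).Infinite := by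
    have hset : setOf P = {n | n.Prime} \ {n | n ≤ p0} := by
      ext n; simp [hP, not_le]; exact Iff.rfl
    rw [hset]
    exact Nat.infinite_setOf_prime.diff (Set.finite_le_nat p0)
  set q := Nat.nth P with hq
  have hqmem : ∀ k, (q k).Prime ∧ p0 < q k := fun k => Nat.nth_mem_of_infinite hinf k
  have hq3 : ∀ k, 3 ≤ q k := by
    intro k
    have h1 := (hqmem k).1.two_le
    have h2 := (hqmem k).2
    have h3 := hp0.two_le
    omega
  have hqpos : ∀ k, (0:ℝ) < (q k : ℝ) - 2 := by
    intro k
    have : (3:ℝ) ≤ (q k : ℝ) := by exact_mod_cast hq3 k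
    linarith
  have hqne : ∀ k, (q k : ℝ) - 2 ≠ 0 := fun k => ne_of_gt (hqpos k)
  have hqk : ∀ k, k ≤ q k := fun k => (Nat.nth_strictMono hinf).le_apply
  set w : ℕ → Fin J → ℝ := fun k => (prodMat J p0 k).mulVec w0 with hw
  have hstep : ∀ k, w (k+1) = (Mmat J ((q k : ℕ) : ℝ)).mulVec (w k) := by
    intro k
    show (prodMat J p0 (k+1)).mulVec w0 = _
    rw [show prodMat J p0 (k+1)
        = Mmat J ((Nat.nth (fun n => n.Prime ∧ p0 < n) k : ℕ) : ℝ) * prodMat J p0 k from rfl,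
      Matrix.mulVec_mulVec]
  have hsum : ∀ k, ∑ i, w k i = ∑ j, w0 j := by
    intro k
    induction k with
    | zero =>
      simp only [hw]
      rw [show prodMat J p0 0 = 1 from rfl, Matrix.one_mulVec]
    | succ k ih =>
      rw [show w (k+1) = _ from hstep k, Mmat_mulVec_sum (hqne k), ih]
  have hcomp : ∀ i : Fin J, 1 ≤ (i : ℕ) → Tendsto (fun k => w k i) atTop (nhds 0) := by
    suffices H : ∀ m, ∀ i : Fin J, 1 ≤ (i : ℕ) → J ≤ (i : ℕ) + m →
        Tendsto (fun k => w k i) atTop (nhds 0) by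
      exact fun i hi => H J i hi (by omega)
    intro m
    induction m with
    | zero =>
      intro i hi hJi
      exact absurd i.isLt (by omega)
    | succ m ih =>
      intro i hi hJi
      set a : ℕ → ℝ := fun k => 1 - ((i : ℕ) : ℝ) / ((q k : ℝ) - 2) with ha_def
      have hivR : (1:ℝ) ≤ ((i : ℕ) : ℝ) := by exact_mod_cast hi
      have hacoef : ∀ k, (if (i : ℕ) = 0 then (1:ℝ)
          else ((q k : ℝ) - ((i : ℕ) : ℝ) - 2) / ((q k : ℝ) - 2)) = a k := by
        intro k
        rw [if_neg (by omega), ha_def]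
        have hrw2 : ((q k : ℝ) - ((i : ℕ) : ℝ) - 2) = ((q k : ℝ) - 2) - ((i : ℕ) : ℝ) := by ring
        rw [hrw2, sub_div, div_self (hqne k)]
      have haN : ∀ k, (i : ℕ) + 2 ≤ k → 0 ≤ a k ∧ a k ≤ 1 := by
        intro k hk
        have hqk' : ((i : ℕ) : ℝ) ≤ (q k : ℝ) - 2 := by
          have h1 : (i : ℕ) + 2 ≤ q k := le_trans hk (hqk k)
          have h2 : ((i : ℕ) : ℝ) + 2 ≤ (q k : ℝ) := by exact_mod_cast h1
          linarith
        constructor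
        · have h3 : ((i : ℕ) : ℝ) / ((q k : ℝ) - 2) ≤ 1 :=
            (div_le_one (hqpos k)).mpr hqk'
          simp only [ha_def]; linarith
        · have h4 : 0 ≤ ((i : ℕ) : ℝ) / ((q k : ℝ) - 2) := by
            have := hqpos k; positivity
          simp only [ha_def]; linarith
      have hprod : ∀ m', (i : ℕ) + 2 ≤ m' →
          Tendsto (fun n => ∏ k ∈ Finset.Ico m' n, a k) atTop (nhds 0) := by
        intro m' hm'
        refine prod_tendsto_zero a (fun k => 1 / ((q k : ℝ) - 2)) m'
          (fun k => by have := hqpos k; positivity)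
          (fun k hk => (haN k (le_trans hm' hk)).1)
          (fun k hk => ?_) (qdiv p0 hp0)
        have h2 := hqpos k
        have h5 : 1 / ((q k : ℝ) - 2) ≤ ((i : ℕ) : ℝ) / ((q k : ℝ) - 2) := by gcongr
        simp only [ha_def]; linarith
      by_cases hlt : (i : ℕ) + 1 < J
      · have hnext : Tendsto (fun k => w k (⟨(i : ℕ) + 1, hlt⟩ : Fin J)) atTop (nhds 0) :=
          ih ⟨(i : ℕ) + 1, hlt⟩ (by simp) (by simpa using by omega)
        have hC : (0:ℝ) < (((i : ℕ) : ℝ) + 1) / ((i : ℕ) : ℝ) := by positivity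
        apply iter_tendsto_zero (fun k => w k i) a
          (fun k => |w k (⟨(i : ℕ) + 1, hlt⟩ : Fin J)|) _ hC ((i : ℕ) + 2)
        · intro k hk
          have hrw : w (k+1) i = a k * w k i
              + (((i : ℕ) : ℝ) + 1) / ((q k : ℝ) - 2) * w k (⟨(i : ℕ) + 1, hlt⟩ : Fin J) := by
            rw [show w (k+1) = _ from hstep k, Mmat_mulVec, hacoef k, dif_pos hlt]
          have hB : (((i : ℕ) : ℝ) + 1) / ((i : ℕ) : ℝ) * (1 - a k)
              = (((i : ℕ) : ℝ) + 1) / ((q k : ℝ) - 2) := by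
            simp only [ha_def]
            field_simp
            ring
          have h0a := (haN k hk).1
          have hBpos : (0:ℝ) ≤ (((i : ℕ) : ℝ) + 1) / ((q k : ℝ) - 2) := by
            have := hqpos k; positivity
          rw [hrw]
          refine le_trans (abs_add_le _ _) (le_of_eq ?_)
          rw [abs_mul, abs_mul, abs_of_nonneg h0a, abs_of_nonneg hBpos, hB]
        · exact haN
        · exact fun k => abs_nonneg _
        · simpa using hnext.abs
        · exact hprod
      · apply iter_tendsto_zero (fun k => w k i) a (fun _ => 0) 1 one_pos ((i : ℕ) + 2)
        · intro k hk
          have hrw : w (k+1) i = a k * w k i := by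
            rw [show w (k+1) = _ from hstep k, Mmat_mulVec, hacoef k, dif_neg hlt, add_zero]
          rw [hrw, abs_mul, abs_of_nonneg (haN k hk).1]
          simp
        · exact haN
        · exact fun k => le_refl 0
        · exact tendsto_const_nhds
        · exact hprod
  set z : Fin J := ⟨0, hJ⟩ with hz
  have hrest : Tendsto (fun k => ∑ i ∈ Finset.univ.erase z, w k i) atTop (nhds 0) := by
    have h := tendsto_finset_sum (Finset.univ.erase z)
      (fun i hi => hcomp i (by
        have hiz : i ≠ z := Finset.ne_of_mem_erase hi
        by_contra hcon
        push_neg at hcon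
        exact hiz (Fin.ext (by simp only [hz]; omega))))
    simpa using h
  have hwz : ∀ k, w k z = (∑ j, w0 j) - ∑ i ∈ Finset.univ.erase z, w k i := by
    intro k
    have h1 := hsum k
    have h2 : w k z + ∑ i ∈ Finset.univ.erase z, w k i = ∑ i, w k i :=
      Finset.add_sum_erase _ _ (Finset.mem_univ z)
    linarith
  have hfin : Tendsto (fun k => (∑ j, w0 j) - ∑ i ∈ Finset.univ.erase z, w k i)
      atTop (nhds ((∑ j, w0 j) - 0)) := tendsto_const_nhds.sub hrest
  rw [sub_zero] at hfin
  exact hfin.congr fun k => (hwz k).symm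
end
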